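/- arXiv:0709.0459 — 11 statements merged into one kernel-verified Lean document; each statement's English description precedes it below -/
import Mathlib

section
/- The set G := {x ∈ E | ∀ ν ∈ ℕ, ∇^[ν](x) ∈ Set.range (b^[ν])} is an R-submodule of E, and it is stable under b, i.e. b(G) ⊆ G. -/
/-- The set `G = {x | ∀ ν, nab^[ν] x ∈ range (b^[ν])}` is an `R`-submodule of `E`,
stable under `b` (Proposition 2.3 of the paper). -/
theorem G_is_submodule_and_b_stable
    (R : Type*) [CommRing R] [Algebra ℂ R]
    (E : Type*) [AddCommGroup E] [Module R E] [Module ℂ E] [IsScalarTower ℂ R E]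
    (d : Derivation ℂ R R) (b : E →ₗ[R] E) (nab : E →ₗ[ℂ] E)
    (h_leibniz : ∀ (r : R) (x : E), nab (r • x) = d r • b x + r • nab x)
    (h_comm : ∀ x : E, nab (b x) = b (nab x)) :
    ∃ G' : Submodule R E,
      (G' : Set E) = {x : E | ∀ ν : ℕ, (⇑nab)^[ν] x ∈ Set.range ((⇑b)^[ν])} ∧
      ∀ x ∈ G', b x ∈ G' := by
  -- iterates of b agree with powers of b as a linear endomorphism
  have hbpow : ∀ (ν : ℕ) (x : E), (⇑b)^[ν] x = (b ^ ν) x := by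
    intro ν x
    exact (Module.End.pow_apply b ν x).symm
  have hnpow : ∀ (ν : ℕ) (x : E), (⇑nab)^[ν] x = (nab ^ ν) x := by
    intro ν x
    exact (Module.End.pow_apply nab ν x).symm
  -- nab iterates commute with b
  have hc : ∀ (k : ℕ) (x : E), (⇑nab)^[k] (b x) = b ((⇑nab)^[k] x) := by
    intro k
    induction k with
    | zero => intro x; simp
    | succ k ih =>
        intro x
        rw [Function.iterate_succ_apply, h_comm, ih, ← Function.iterate_succ_apply]
  -- the key lemma
  have key : ∀ (ν m : ℕ) (x : E),
      (∀ k : ℕ, (⇑nab)^[k] x ∈ LinearMap.range (b ^ (k + m))) →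
      ∀ r : R, (⇑nab)^[ν] (r • x) ∈ LinearMap.range (b ^ (ν + m)) := by
    intro ν
    induction ν with
    | zero =>
        intro m x hx r
        have h := Submodule.smul_mem (LinearMap.range (b ^ (0 + m))) r (hx 0)
        simpa using h
    | succ ν ih =>
        intro m x hx r
        have h1 : (⇑nab)^[ν + 1] (r • x)
            = (nab ^ ν) (d r • b x) + (nab ^ ν) (r • nab x) := by
          rw [Function.iterate_succ_apply, h_leibniz, hnpow, map_add]
        rw [h1]
        have hbx : ∀ k : ℕ, (⇑nab)^[k] (b x) ∈ LinearMap.range (b ^ (k + (m + 1))) := by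
          intro k
          obtain ⟨y, hy⟩ := hx k
          refine ⟨y, ?_⟩
          rw [hc k x, ← hy]
          rw [show k + (m + 1) = (k + m) + 1 by ring, pow_succ']
          rfl
        have hnx : ∀ k : ℕ, (⇑nab)^[k] (nab x) ∈ LinearMap.range (b ^ (k + (m + 1))) := by
          intro k
          have h2 : (⇑nab)^[k] (nab x) = (⇑nab)^[k + 1] x :=
            (Function.iterate_succ_apply _ _ _).symm
          rw [h2, show k + (m + 1) = (k + 1) + m by ring]
          exact hx (k + 1)
        have t1 := ih (m + 1) (b x) hbx (d r)
        have t2 := ih (m + 1) (nab x) hnx r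
        rw [hnpow] at t1 t2
        rw [show ν + (m + 1) = ν + 1 + m by ring] at t1 t2
        exact Submodule.add_mem _ t1 t2
  -- build the submodule
  refine ⟨{
    carrier := {x : E | ∀ ν : ℕ, (⇑nab)^[ν] x ∈ Set.range ((⇑b)^[ν])}
    add_mem' := ?_
    zero_mem' := ?_
    smul_mem' := ?_ }, rfl, ?_⟩
  · intro x y hx hy ν
    obtain ⟨z, hz⟩ := hx ν
    obtain ⟨w, hw⟩ := hy ν
    refine ⟨z + w, ?_⟩
    have h1 : (⇑nab)^[ν] (x + y) = (⇑nab)^[ν] x + (⇑nab)^[ν] y := by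
      rw [hnpow, hnpow, hnpow, map_add]
    rw [h1, ← hz, ← hw]
    simp [hbpow]
  · intro ν
    have h0 : (⇑nab)^[ν] (0 : E) = 0 := by rw [hnpow, map_zero]
    rw [h0]
    exact ⟨0, by rw [hbpow, map_zero]⟩
  · intro r x hx ν
    have hx' : ∀ k : ℕ, (⇑nab)^[k] x ∈ LinearMap.range (b ^ (k + 0)) := by
      intro k
      obtain ⟨z, hz⟩ := hx k
      exact ⟨z, by rw [Nat.add_zero, ← hbpow, hz]⟩
    obtain ⟨z, hz⟩ := key ν 0 x hx' r
    rw [Nat.add_zero] at hz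
    exact ⟨z, by rw [hbpow, hz]⟩
  · intro x hx ν
    obtain ⟨y, hy⟩ := hx ν
    refine ⟨b y, ?_⟩
    calc (⇑b)^[ν] (b y) = b ((⇑b)^[ν] y) := by
          rw [← Function.iterate_succ_apply, Function.iterate_succ_apply']
      _ = b ((⇑nab)^[ν] x) := by rw [hy]
      _ = (⇑nab)^[ν] (b x) := (hc ν x).symm
end

section
/- Every R-submodule F of E satisfying ∇(F) ⊆ b(F) (i.e. for each x ∈ F there is y ∈ F with ∇(x) = b(y)) is contained in G. Thus G is the largest R-submodule of E stable under b⁻¹∇. -/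
/-- Every `R`-submodule `F` of `E` stable under `b⁻¹∇` (i.e. `∇(F) ⊆ b(F)`) is
contained in `G`; thus `G` is the largest such submodule (maximality assertion
of Proposition 2.3 of the paper). -/
theorem G_is_largest_stable_submodule
    (R : Type*) [CommRing R] [Algebra ℂ R]
    (E : Type*) [AddCommGroup E] [Module R E] [Module ℂ E] [IsScalarTower ℂ R E]
    (d : Derivation ℂ R R) (b : E →ₗ[R] E) (nab : E →ₗ[ℂ] E)
    (h_leibniz : ∀ (r : R) (x : E), nab (r • x) = d r • b x + r • nab x)
    (h_comm : ∀ x : E, nab (b x) = b (nab x))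
    (G : Set E)
    (hG : G = {x : E | ∀ ν : ℕ, (⇑nab)^[ν] x ∈ Set.range ((⇑b)^[ν])})
    (F : Submodule R E)
    (hF : ∀ x ∈ F, ∃ y ∈ F, nab x = b y) :
    (F : Set E) ⊆ G := by
  subst hG
  intro x hx ν
  suffices h : ∀ ν : ℕ, ∀ x ∈ F, ∃ y ∈ F, (⇑nab)^[ν] x = (⇑b)^[ν] y by
    obtain ⟨y, _, hy⟩ := h ν x hx
    exact ⟨y, hy.symm⟩
  intro ν
  induction ν with
  | zero => exact fun x hx => ⟨x, hx, rfl⟩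
  | succ n ih =>
    intro x hx
    obtain ⟨y, hy, hxy⟩ := hF x hx
    obtain ⟨z, hz, hyz⟩ := ih y hy
    refine ⟨z, hz, ?_⟩
    have hcomm : ∀ m : ℕ, ∀ w : E, (⇑nab)^[m] (b w) = b ((⇑nab)^[m] w) := by
      intro m
      induction m with
      | zero => intro w; rfl
      | succ k ihk =>
        intro w
        rw [Function.iterate_succ_apply, h_comm, ihk]
        rfl
    rw [Function.iterate_succ_apply, hxy, hcomm, hyz, Function.iterate_succ_apply']
end

section
/- Let x ∈ E and let N be the R-submodule of E generated by the set {b^[n](x) : n ∈ ℕ}. If ∇(x) ∈ b(G + N) (the image under b of the submodule G + N), then x ∈ G. In particular, if ∇(x) = 0 then x ∈ G, so Ker ∇ ⊆ G. -/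
/-- Part (2) of Proposition 2.3 of the paper: if `∇ x ∈ b(G + N)` where `N` is the
`R`-submodule generated by `{b^[n] x : n ∈ ℕ}`, then `x ∈ G`.
In particular `Ker ∇ ⊆ G`. -/
theorem mem_G_of_nabla_mem
    (R : Type*) [CommRing R] [Algebra ℂ R]
    (E : Type*) [AddCommGroup E] [Module R E] [Module ℂ E] [IsScalarTower ℂ R E]
    (d : Derivation ℂ R R) (b : E →ₗ[R] E) (nab : E →ₗ[ℂ] E)
    (h_leibniz : ∀ (r : R) (x : E), nab (r • x) = d r • b x + r • nab x)
    (h_comm : ∀ x : E, nab (b x) = b (nab x))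
    (G : Set E)
    (hG : G = {x : E | ∀ ν : ℕ, (⇑nab)^[ν] x ∈ Set.range ((⇑b)^[ν])})
    (x : E)
    (N : Submodule R E)
    (hN : N = Submodule.span R (Set.range fun n : ℕ => (⇑b)^[n] x))
    (hx : nab x ∈ ⇑b '' {z : E | ∃ g ∈ G, ∃ m ∈ N, z = g + m}) :
    x ∈ G ∧ ∀ y : E, nab y = 0 → y ∈ G := by
  -- `SR k` is the range of `b^[k]`
  set SR : ℕ → Set E := fun k => Set.range ((⇑b)^[k]) with hSR
  -- basic facts about iterates
  have hbpow : ∀ (k : ℕ) (z : E), (⇑b)^[k] z = (b ^ k) z := fun k z =>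
    (Module.End.pow_apply b k z).symm
  have hnpow : ∀ (k : ℕ) (z : E), (⇑nab)^[k] z = (nab ^ k) z := fun k z =>
    (Module.End.pow_apply nab k z).symm
  have hadd : ∀ (k : ℕ) (u v : E), u ∈ SR k → v ∈ SR k → u + v ∈ SR k := by
    rintro k u v ⟨a, rfl⟩ ⟨c, rfl⟩
    exact ⟨a + c, by rw [hbpow, map_add, ← hbpow, ← hbpow]⟩
  have hsmul : ∀ (k : ℕ) (r : R) (u : E), u ∈ SR k → r • u ∈ SR k := by
    rintro k r u ⟨a, rfl⟩
    exact ⟨r • a, by rw [hbpow, map_smul, ← hbpow]⟩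
  have hsucc : ∀ (k : ℕ) (u : E), u ∈ SR k → b u ∈ SR (k + 1) := by
    rintro k u ⟨a, rfl⟩
    exact ⟨a, by rw [Function.iterate_succ_apply']⟩
  have hiterm : ∀ (s t : ℕ) (u : E), u ∈ SR t → (⇑b)^[s] u ∈ SR (s + t) := by
    rintro s t u ⟨a, rfl⟩
    exact ⟨a, Function.iterate_add_apply _ s t a⟩
  have hmono : ∀ (a c : ℕ) (u : E), a ≤ c → u ∈ SR c → u ∈ SR a := by
    intro a c u h hu
    obtain ⟨n, rfl⟩ := Nat.exists_eq_add_of_le h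
    obtain ⟨z, rfl⟩ := hu
    exact ⟨(⇑b)^[n] z, (Function.iterate_add_apply _ a n z).symm⟩
  have hnadd : ∀ (k : ℕ) (u v : E), (⇑nab)^[k] (u + v) = (⇑nab)^[k] u + (⇑nab)^[k] v := by
    intro k u v
    rw [hnpow, hnpow, hnpow, map_add]
  have hnzero : ∀ k : ℕ, (⇑nab)^[k] (0 : E) = 0 := by
    intro k; rw [hnpow, map_zero]
  have hbadd : ∀ (k : ℕ) (u v : E), (⇑b)^[k] (u + v) = (⇑b)^[k] u + (⇑b)^[k] v := by
    intro k u v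
    rw [hbpow, hbpow, hbpow, map_add]
  -- `nab` iterates commute with `b` iterates
  have hcomm1 : ∀ (n : ℕ) (y : E), nab ((⇑b)^[n] y) = (⇑b)^[n] (nab y) := by
    intro n
    induction n with
    | zero => intro y; rfl
    | succ n ih =>
      intro y
      rw [Function.iterate_succ_apply', h_comm, ih]
      exact (Function.iterate_succ_apply' _ n _).symm
  have hcomm2 : ∀ (k n : ℕ) (y : E), (⇑nab)^[k] ((⇑b)^[n] y) = (⇑b)^[n] ((⇑nab)^[k] y) := by
    intro k
    induction k with
    | zero => intro n y; rfl
    | succ k ih =>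
      intro n y
      rw [Function.iterate_succ_apply, hcomm1, ih, ← Function.iterate_succ_apply]
  have hcommb : ∀ (k : ℕ) (y : E), (⇑nab)^[k] (b y) = b ((⇑nab)^[k] y) := by
    intro k y
    simpa using hcomm2 k 1 y
  -- extract the decomposition of `nab x`
  obtain ⟨z, hzmem, hz⟩ := hx
  obtain ⟨g, hg, m₀, hm₀, rfl⟩ := hzmem
  subst hG
  have hgG : ∀ ν : ℕ, (⇑nab)^[ν] g ∈ SR ν := hg
  have hnx : nab x = b g + b m₀ := by rw [← hz, map_add]
  -- scalar multiplication lemma, with a shift parameter `t ≥ 1`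
  have lemS : ∀ (k t : ℕ) (r : R) (y : E), 1 ≤ t →
      (∀ j ≤ k, (⇑nab)^[j] y ∈ SR (j + t)) → (⇑nab)^[k] (r • y) ∈ SR (k + t) := by
    intro k
    induction k with
    | zero =>
      intro t r y _ h
      exact hmono (0 + t) t _ (by omega)
        (hsmul t r y (hmono t (0 + t) y (by omega) (h 0 le_rfl)))
    | succ k ih =>
      intro t r y ht h
      have h1 : (⇑nab)^[k + 1] (r • y)
          = (⇑nab)^[k] (d r • b y) + (⇑nab)^[k] (r • nab y) := by
        rw [Function.iterate_succ_apply, h_leibniz, hnadd]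
      rw [h1]
      apply hadd
      · have := ih (t + 1) (d r) (b y) (by omega) (fun j hj => by
          rw [hcommb]
          have := hsucc (j + t) _ (h j (by omega))
          exact hmono (j + (t + 1)) (j + t + 1) _ (by omega) this)
        exact hmono (k + 1 + t) (k + (t + 1)) _ (by omega) this
      · have := ih (t + 1) r (nab y) (by omega) (fun j hj => by
          rw [← Function.iterate_succ_apply]
          exact hmono (j + (t + 1)) (j + 1 + t) _ (by omega) (h (j + 1) (by omega)))
        exact hmono (k + 1 + t) (k + (t + 1)) _ (by omega) this
  -- main claim: for all `m ∈ N`, `nab^[j] (b m) ∈ SR (j + 1)`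
  have lemD : ∀ (k : ℕ) (m : E), m ∈ N → ∀ j ≤ k, (⇑nab)^[j] (b m) ∈ SR (j + 1) := by
    intro k
    induction k with
    | zero =>
      intro m _ j hj
      interval_cases j
      exact hsucc 0 m ⟨m, rfl⟩
    | succ k ih =>
      intro m hm
      rw [hN] at hm
      induction hm using Submodule.span_induction with
      | mem w hw =>
        obtain ⟨n, rfl⟩ := hw
        intro j hj
        show (⇑nab)^[j] (b ((⇑b)^[n] x)) ∈ SR (j + 1)
        rw [← Function.iterate_succ_apply' (⇑b) n x]
        match j with
        | 0 =>
          exact hmono 1 (n + 1 + 0) _ (by omega) (hiterm (n + 1) 0 x ⟨x, rfl⟩)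
        | (j' + 1) =>
          rw [Function.iterate_succ_apply, hcomm1, hnx, hbadd, hnadd, hcomm2, hcomm2]
          apply hadd
          · -- b^[n+1] (nab^[j'] (b g)) ∈ SR (j'+2)
            have h1 : (⇑nab)^[j'] (b g) ∈ SR (j' + 1) := by
              rw [hcommb]; exact hsucc j' _ (hgG j')
            exact hmono (j' + 1 + 1) (n + 1 + (j' + 1)) _ (by omega)
              (hiterm (n + 1) (j' + 1) _ h1)
          · -- b^[n+1] (nab^[j'] (b m₀)) ∈ SR (j'+2)
            have h2 : (⇑nab)^[j'] (b m₀) ∈ SR (j' + 1) := ih m₀ hm₀ j' (by omega)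
            exact hmono (j' + 1 + 1) (n + 1 + (j' + 1)) _ (by omega)
              (hiterm (n + 1) (j' + 1) _ h2)
      | zero =>
        intro j hj
        rw [map_zero, hnzero]
        exact ⟨0, by rw [hbpow, map_zero]⟩
      | add u v hu hv hpu hpv =>
        intro j hj
        rw [map_add, hnadd]
        exact hadd _ _ _ (hpu j hj) (hpv j hj)
      | smul r u hu hpu =>
        intro j hj
        rw [map_smul]
        exact lemS j 1 r (b u) (by omega) (fun i hi => hpu i (by omega))
  have hxG : x ∈ {x : E | ∀ ν : ℕ, (⇑nab)^[ν] x ∈ Set.range ((⇑b)^[ν])} := by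
    intro ν
    match ν with
    | 0 => exact ⟨x, rfl⟩
    | (ν' + 1) =>
      show (⇑nab)^[ν' + 1] x ∈ SR (ν' + 1)
      rw [Function.iterate_succ_apply, hnx, hnadd]
      apply hadd
      · rw [hcommb]; exact hsucc ν' _ (hgG ν')
      · exact lemD ν' m₀ hm₀ ν' le_rfl
  refine ⟨hxG, ?_⟩
  intro y hy ν
  match ν with
  | 0 => exact ⟨y, rfl⟩
  | (ν' + 1) =>
    show (⇑nab)^[ν' + 1] y ∈ SR (ν' + 1)
    rw [Function.iterate_succ_apply, hy, hnzero]
    exact ⟨0, by rw [hbpow, map_zero]⟩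
end

section
/- Let r ∈ R be an element such that for every ν ∈ ℕ and every y ∈ E, r • y ∈ Set.range (b^[ν]) implies y ∈ Set.range (b^[ν]). If x ∈ E satisfies r • x ∈ G, then x ∈ G. -/
set_option linter.unusedSectionVars false

section Aux

variable {R : Type*} [CommRing R] [Algebra ℂ R]
  {E : Type*} [AddCommGroup E] [Module R E] [Module ℂ E] [IsScalarTower ℂ R E]
  (d : Derivation ℂ R R) (b : E →ₗ[R] E) (nab : E →ₗ[ℂ] E)

/-- Auxiliary submodule: span of the `b^[k] (∇^[ν-k] x)` for `1 ≤ k ≤ ν`. -/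
def NsubAux (x : E) (ν : ℕ) : Submodule R E :=
  Submodule.span R ((fun k => (⇑b)^[k] ((⇑nab)^[ν - k] x)) '' {k | 1 ≤ k ∧ k ≤ ν})

variable (h_leibniz : ∀ (r : R) (x : E), nab (r • x) = d r • b x + r • nab x)
  (h_comm : ∀ x : E, nab (b x) = b (nab x))

include h_comm in
theorem nab_iterate_comm (k : ℕ) (y : E) : nab ((⇑b)^[k] y) = (⇑b)^[k] (nab y) := by
  induction k generalizing y with
  | zero => simp
  | succ n ih =>
    rw [Function.iterate_succ_apply', h_comm, ih]
    exact (Function.iterate_succ_apply' _ _ _).symm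

theorem b_maps_Nsub (x : E) (ν : ℕ) :
    (NsubAux b nab x ν).map b ≤ NsubAux b nab x (ν + 1) := by
  rw [NsubAux, Submodule.map_span, Submodule.span_le]
  rintro _ ⟨_, ⟨k, ⟨hk1, hk2⟩, rfl⟩, rfl⟩
  apply Submodule.subset_span
  refine ⟨k + 1, ⟨Nat.le_add_left 1 k, Nat.succ_le_succ hk2⟩, ?_⟩
  simp only [Nat.succ_sub_succ, Function.iterate_succ_apply']

include h_leibniz h_comm in
theorem nab_maps_Nsub (x : E) (ν : ℕ) {z : E} (hz : z ∈ NsubAux b nab x ν) :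
    nab z ∈ NsubAux b nab x (ν + 1) := by
  induction hz using Submodule.span_induction with
  | mem g hg =>
    obtain ⟨k, ⟨hk1, hk2⟩, rfl⟩ := hg
    have hks : ν + 1 - k = (ν - k) + 1 := by omega
    have heq : nab ((⇑b)^[k] ((⇑nab)^[ν - k] x)) = (⇑b)^[k] ((⇑nab)^[ν + 1 - k] x) := by
      rw [nab_iterate_comm b nab h_comm, hks, Function.iterate_succ_apply']
    rw [heq]
    exact Submodule.subset_span ⟨k, ⟨hk1, Nat.le_succ_of_le hk2⟩, rfl⟩
  | zero => simp
  | add y z hy hz ihy ihz => rw [map_add]; exact add_mem ihy ihz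
  | smul s z hz ih =>
    rw [h_leibniz]
    exact add_mem (Submodule.smul_mem _ _ (b_maps_Nsub b nab x ν ⟨z, hz, rfl⟩))
      (Submodule.smul_mem _ _ ih)

include h_leibniz h_comm in
theorem sub_mem_Nsub (r : R) (x : E) (ν : ℕ) :
    (⇑nab)^[ν] (r • x) - r • (⇑nab)^[ν] x ∈ NsubAux b nab x ν := by
  induction ν with
  | zero => simp
  | succ n ih =>
    have key : (⇑nab)^[n + 1] (r • x) - r • (⇑nab)^[n + 1] x
        = d r • (⇑b)^[1] ((⇑nab)^[n + 1 - 1] x)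
          + nab ((⇑nab)^[n] (r • x) - r • (⇑nab)^[n] x) := by
      rw [Function.iterate_succ_apply', Function.iterate_succ_apply',
        map_sub, h_leibniz]
      simp only [Function.iterate_one, Nat.add_sub_cancel]
      abel
    rw [key]
    refine add_mem (Submodule.smul_mem _ _ (Submodule.subset_span ?_))
      (nab_maps_Nsub d b nab h_leibniz h_comm x n ih)
    exact ⟨1, ⟨le_refl 1, Nat.le_add_left 1 n⟩, rfl⟩

end Aux

/-- Part (3) of Proposition 2.3 of the paper: if `r` is a non-zero-divisor in the
appropriate sense (`r • y ∈ range (b^[ν]) → y ∈ range (b^[ν])` for all `ν`), then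
`r • x ∈ G` implies `x ∈ G`. -/
theorem mem_G_of_smul_mem_G
    (R : Type*) [CommRing R] [Algebra ℂ R]
    (E : Type*) [AddCommGroup E] [Module R E] [Module ℂ E] [IsScalarTower ℂ R E]
    (d : Derivation ℂ R R) (b : E →ₗ[R] E) (nab : E →ₗ[ℂ] E)
    (h_leibniz : ∀ (r : R) (x : E), nab (r • x) = d r • b x + r • nab x)
    (h_comm : ∀ x : E, nab (b x) = b (nab x))
    (G : Set E)
    (hG : G = {x : E | ∀ ν : ℕ, (⇑nab)^[ν] x ∈ Set.range ((⇑b)^[ν])})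
    (r : R)
    (hr : ∀ (ν : ℕ) (y : E), r • y ∈ Set.range ((⇑b)^[ν]) → y ∈ Set.range ((⇑b)^[ν]))
    (x : E) (hx : r • x ∈ G) :
    x ∈ G := by
  subst hG
  intro ν
  induction ν using Nat.strong_induction_on with
  | _ ν IH =>
    -- the auxiliary submodule lies in the range of `b^[ν]`
    have hN : NsubAux b nab x ν ≤ LinearMap.range (b ^ ν) := by
      rw [NsubAux, Submodule.span_le]
      rintro _ ⟨k, ⟨hk1, hk2⟩, rfl⟩
      obtain ⟨w, hw⟩ := IH (ν - k) (Nat.sub_lt (lt_of_lt_of_le hk1 hk2) hk1)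
      refine ⟨w, ?_⟩
      show (b ^ ν) w = (⇑b)^[k] ((⇑nab)^[ν - k] x)
      rw [Module.End.pow_apply, ← hw, ← Function.iterate_add_apply,
        Nat.add_sub_cancel' hk2]
    obtain ⟨u, hu⟩ := hx ν
    obtain ⟨w, hw⟩ := hN (sub_mem_Nsub d b nab h_leibniz h_comm r x ν)
    apply hr ν
    refine ⟨u - w, ?_⟩
    have h1 : (⇑b)^[ν] (u - w) = (b ^ ν) u - (b ^ ν) w := by
      rw [← Module.End.pow_apply, map_sub]
    rw [h1, hw, Module.End.pow_apply, hu]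
    abel
end

section
/- Assume b is injective, and let r ∈ R be an element such that for every ν ∈ ℕ and every y ∈ E, r • y ∈ Set.range (b^[ν]) implies y ∈ Set.range (b^[ν]). If x ∈ G and r • x ∈ b(G), then x ∈ b(G). -/
/-- Part (4) of Proposition 2.3 of the paper: with `b` injective and `r` a
non-zero-divisor in the appropriate sense, if `x ∈ G` and `r • x ∈ b(G)`
then `x ∈ b(G)`. -/
theorem mem_bG_of_smul_mem_bG
    (R : Type*) [CommRing R] [Algebra ℂ R]
    (E : Type*) [AddCommGroup E] [Module R E] [Module ℂ E] [IsScalarTower ℂ R E]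
    (d : Derivation ℂ R R) (b : E →ₗ[R] E) (nab : E →ₗ[ℂ] E)
    (h_leibniz : ∀ (r : R) (x : E), nab (r • x) = d r • b x + r • nab x)
    (h_comm : ∀ x : E, nab (b x) = b (nab x))
    (hb : Function.Injective b)
    (G : Set E)
    (hG : G = {x : E | ∀ ν : ℕ, (⇑nab)^[ν] x ∈ Set.range ((⇑b)^[ν])})
    (r : R)
    (hr : ∀ (ν : ℕ) (y : E), r • y ∈ Set.range ((⇑b)^[ν]) → y ∈ Set.range ((⇑b)^[ν]))
    (x : E) (hxG : x ∈ G) (hx : r • x ∈ ⇑b '' G) :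
    x ∈ ⇑b '' G := by
  subst hG
  -- basic facts about iterates
  have biter : ∀ (n : ℕ) (w : E), (⇑b)^[n] w = (b ^ n) w := by
    intro n w; rw [Module.End.pow_apply]
  have niter : ∀ (n : ℕ) (w : E), (⇑nab)^[n] w = (nab ^ n) w := by
    intro n w; rw [Module.End.pow_apply]
  have bsmul : ∀ (n : ℕ) (s : R) (w : E), (⇑b)^[n] (s • w) = s • (⇑b)^[n] w := by
    intro n s w; rw [biter, biter, map_smul]
  have badd : ∀ (n : ℕ) (p q : E), (⇑b)^[n] (p + q) = (⇑b)^[n] p + (⇑b)^[n] q := by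
    intro n p q; rw [biter, biter, biter, map_add]
  have bsub : ∀ (n : ℕ) (p q : E), (⇑b)^[n] (p - q) = (⇑b)^[n] p - (⇑b)^[n] q := by
    intro n p q; rw [biter, biter, biter, map_sub]
  have nadd : ∀ (n : ℕ) (p q : E), (⇑nab)^[n] (p + q) = (⇑nab)^[n] p + (⇑nab)^[n] q := by
    intro n p q; rw [niter, niter, niter, map_add]
  have nzero : ∀ (n : ℕ), (⇑nab)^[n] (0 : E) = 0 := by
    intro n; rw [niter, map_zero]
  have range_congr : ∀ {n n' : ℕ}, n = n' →
      Set.range ((⇑b)^[n]) = Set.range ((⇑b)^[n']) := by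
    rintro n _ rfl; rfl
  have h_comm' : ∀ (ν : ℕ) (z : E), (⇑nab)^[ν] (b z) = b ((⇑nab)^[ν] z) := by
    intro ν
    induction ν with
    | zero => intro z; simp
    | succ n ih =>
      intro z
      rw [Function.iterate_succ_apply, h_comm, ih, ← Function.iterate_succ_apply]
  -- key Leibniz lemma
  have L : ∀ (k m : ℕ) (s : R) (u : E),
      (∀ j ≤ k, (⇑nab)^[j] u ∈ Set.range ((⇑b)^[j + m])) →
      (⇑nab)^[k] (s • u) ∈ Set.range ((⇑b)^[k + m]) := by
    intro k
    induction k with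
    | zero =>
      intro m s u hu
      obtain ⟨w, hw⟩ := hu 0 le_rfl
      exact ⟨s • w, by simp only [Function.iterate_zero, id] at hw ⊢; rw [bsmul, hw]⟩
    | succ k ih =>
      intro m s u hu
      rw [Function.iterate_succ_apply, h_leibniz, nadd]
      have h1 : (⇑nab)^[k] (d s • b u) ∈ Set.range ((⇑b)^[k + (m + 1)]) := by
        apply ih (m + 1) (d s) (b u)
        intro j hj
        rw [h_comm' j]
        obtain ⟨w, hw⟩ := hu j (le_trans hj (Nat.le_succ k))
        exact ⟨w, by rw [show j + (m+1) = (j+m) + 1 from rfl,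
          Function.iterate_succ_apply', hw]⟩
      have h2 : (⇑nab)^[k] (s • nab u) ∈ Set.range ((⇑b)^[k + (m + 1)]) := by
        apply ih (m + 1) s (nab u)
        intro j hj
        have h := hu (j + 1) (Nat.succ_le_succ hj)
        rw [Function.iterate_succ_apply] at h
        rwa [range_congr (show j + (m+1) = (j+1) + m by omega)]
      obtain ⟨w1, hw1⟩ := h1
      obtain ⟨w2, hw2⟩ := h2
      refine ⟨w1 + w2, ?_⟩
      rw [show k + 1 + m = k + (m + 1) by omega, badd, hw1, hw2]
  -- the defect D
  set D : ℕ → E := fun ν => (⇑nab)^[ν] (r • x) - r • (⇑nab)^[ν] x with hD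
  have D_rec : ∀ ν, D (ν + 1) = nab (D ν) + d r • b ((⇑nab)^[ν] x) := by
    intro ν
    simp only [hD]
    rw [map_sub, Function.iterate_succ_apply', Function.iterate_succ_apply',
      h_leibniz]
    abel
  have Q : ∀ ν k, (∀ j, j < ν + k → (⇑nab)^[j] x ∈ Set.range ((⇑b)^[j + 1])) →
      (⇑nab)^[k] (D ν) ∈ Set.range ((⇑b)^[ν + 1 + k]) := by
    intro ν
    induction ν with
    | zero =>
      intro k _
      have : D 0 = 0 := by simp [hD]
      rw [this, nzero]
      exact ⟨0, by rw [biter, map_zero]⟩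
    | succ ν ih =>
      intro k hB
      rw [D_rec, nadd]
      have h1 : (⇑nab)^[k + 1] (D ν) ∈ Set.range ((⇑b)^[ν + 1 + (k + 1)]) := by
        apply ih (k + 1)
        intro j hj
        exact hB j (by omega)
      have h2 : (⇑nab)^[k] (d r • b ((⇑nab)^[ν] x)) ∈
          Set.range ((⇑b)^[k + (ν + 2)]) := by
        apply L k (ν + 2)
        intro j hj
        rw [h_comm' j, ← Function.iterate_add_apply]
        obtain ⟨w, hw⟩ := hB (j + ν) (by omega)
        refine ⟨w, ?_⟩
        show (⇑b)^[(j + ν + 1) + 1] w = _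
        rw [Function.iterate_succ_apply', hw]
      obtain ⟨w1, hw1⟩ := h1
      obtain ⟨w2, hw2⟩ := h2
      rw [← Function.iterate_succ_apply nab k (D ν)]
      refine ⟨w1 + w2, ?_⟩
      rw [show ν + 1 + 1 + k = ν + 1 + (k + 1) by omega, badd, hw1,
        show ν + 1 + (k + 1) = k + (ν + 2) by omega, hw2]
  -- r • x = b z with z ∈ G
  obtain ⟨z, hzG, hz⟩ := hx
  -- main claim: ∇^[ν] x ∈ range b^[ν+1]
  have B : ∀ ν, (⇑nab)^[ν] x ∈ Set.range ((⇑b)^[ν + 1]) := by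
    intro ν
    induction ν using Nat.strong_induction_on with
    | _ ν ihB =>
      apply hr (ν + 1)
      have hQ := Q ν 0 (fun j hj => ihB j (by omega))
      simp only [Function.iterate_zero, id] at hQ
      have hrx : (⇑nab)^[ν] (r • x) ∈ Set.range ((⇑b)^[ν + 1]) := by
        rw [← hz, h_comm' ν z]
        obtain ⟨w, hw⟩ := hzG ν
        exact ⟨w, by rw [Function.iterate_succ_apply', hw]⟩
      obtain ⟨w1, hw1⟩ := hrx
      obtain ⟨w2, hw2⟩ := hQ
      simp only [Nat.add_zero] at hw2
      refine ⟨w1 - w2, ?_⟩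
      rw [bsub, hw1, hw2]
      simp [hD]
  -- conclude: x = b y with y ∈ G
  obtain ⟨y, hy⟩ := B 0
  simp only [Nat.zero_add, Function.iterate_zero, Function.iterate_one, id] at hy
  refine ⟨y, ?_, hy⟩
  intro ν
  obtain ⟨w, hw⟩ := B ν
  refine ⟨w, hb ?_⟩
  rw [← h_comm' ν y, hy, ← hw]
  exact (Function.iterate_succ_apply' b ν w).symm
end

section
/- Let t ∈ ℂ with t ≠ 2 and t ≠ −2. Then the images in R/J_t of the nine monomials 1, X, Y, X², X·Y, Y², X²·Y, X·Y², X²·Y² form a basis of the quotient R/J_t as a ℂ-vector space; in particular dim_ℂ (R/J_t) = 9. -/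
open MvPolynomial

noncomputable section MilnorAux

/-- The exponent vector `(a, b)` for the monomial `X^a Y^b`. -/
def ee (a b : ℕ) : Fin 2 →₀ ℕ := Finsupp.single 0 a + Finsupp.single 1 b

lemma ee_apply0 (a b : ℕ) : ee a b 0 = a := by simp [ee, Finsupp.single_apply]
lemma ee_apply1 (a b : ℕ) : ee a b 1 = b := by simp [ee, Finsupp.single_apply]

lemma ee_le {a b a' b' : ℕ} : ee a b ≤ ee a' b' ↔ a ≤ a' ∧ b ≤ b' := by
  rw [Finsupp.le_def]
  constructor
  · intro h; exact ⟨by simpa [ee_apply0] using h 0, by simpa [ee_apply1] using h 1⟩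
  · rintro ⟨h1, h2⟩ i
    fin_cases i <;> simp [ee_apply0, ee_apply1, h1, h2]

lemma ee_sub (a b a' b' : ℕ) : ee a b - ee a' b' = ee (a - a') (b - b') := by
  ext i
  fin_cases i <;> simp [Finsupp.tsub_apply, ee_apply0, ee_apply1]

lemma ee_eq {a b a' b' : ℕ} : ee a b = ee a' b' ↔ a = a' ∧ b = b' := by
  constructor
  · intro h
    exact ⟨by rw [← ee_apply0 a b, h, ee_apply0], by rw [← ee_apply1 a b, h, ee_apply1]⟩
  · rintro ⟨rfl, rfl⟩; rfl

lemma mono_ee (a b : ℕ) :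
    (X 0 ^ a * X 1 ^ b : MvPolynomial (Fin 2) ℂ) = monomial (ee a b) 1 := by
  rw [X_pow_eq_monomial, X_pow_eq_monomial, monomial_mul, one_mul]; rfl

lemma coeff_ee_monomial (a b a' b' : ℕ) (r : ℂ) :
    coeff (ee a b) (monomial (ee a' b') r : MvPolynomial (Fin 2) ℂ)
      = if a' = a ∧ b' = b then r else 0 := by
  rw [coeff_monomial]
  by_cases h : ee a' b' = ee a b
  · rw [if_pos h, if_pos (ee_eq.mp h)]
  · rw [if_neg h, if_neg (fun hc => h (ee_eq.mpr hc))]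

lemma mem_of_C_mul {I : Ideal (MvPolynomial (Fin 2) ℂ)} {a : ℂ} (ha : a ≠ 0)
    {p : MvPolynomial (Fin 2) ℂ} (h : C a * p ∈ I) : p ∈ I := by
  have hp : p = C a⁻¹ * (C a * p) := by
    rw [← mul_assoc, ← C_mul, inv_mul_cancel₀ ha, C_1, one_mul]
  rw [hp]; exact I.mul_mem_left _ h

def fxp (t : ℂ) : MvPolynomial (Fin 2) ℂ := 4 * X 0 ^ 3 + 2 * C t * X 0 * X 1 ^ 2
def fyp (t : ℂ) : MvPolynomial (Fin 2) ℂ := 4 * X 1 ^ 3 + 2 * C t * X 0 ^ 2 * X 1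
def Jp (t : ℂ) : Ideal (MvPolynomial (Fin 2) ℂ) := Ideal.span {fxp t, fyp t}

lemma fxp_mem (t : ℂ) : fxp t ∈ Jp t := Ideal.subset_span (by simp)
lemma fyp_mem (t : ℂ) : fyp t ∈ Jp t := Ideal.subset_span (by simp)

lemma fxp_eq (t : ℂ) : fxp t = monomial (ee 3 0) 4 + monomial (ee 1 2) (2*t) := by
  have h1 : (monomial (ee 3 0) (4:ℂ) : MvPolynomial (Fin 2) ℂ) = 4 * X 0 ^ 3 := by
    rw [show (4:ℂ) = 4 * 1 by ring, ← C_mul_monomial, ← mono_ee]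
    simp [map_ofNat]
  have h2 : (monomial (ee 1 2) (2*t) : MvPolynomial (Fin 2) ℂ) = 2 * C t * X 0 * X 1 ^ 2 := by
    rw [show (2*t:ℂ) = 2*t * 1 by ring, ← C_mul_monomial, ← mono_ee]
    simp [map_mul, map_ofNat]
    ring
  rw [h1, h2, fxp]

lemma fyp_eq (t : ℂ) : fyp t = monomial (ee 0 3) 4 + monomial (ee 2 1) (2*t) := by
  have h1 : (monomial (ee 0 3) (4:ℂ) : MvPolynomial (Fin 2) ℂ) = 4 * X 1 ^ 3 := by
    rw [show (4:ℂ) = 4 * 1 by ring, ← C_mul_monomial, ← mono_ee]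
    simp [map_ofNat]
  have h2 : (monomial (ee 2 1) (2*t) : MvPolynomial (Fin 2) ℂ) = 2 * C t * X 0 ^ 2 * X 1 := by
    rw [show (2*t:ℂ) = 2*t * 1 by ring, ← C_mul_monomial, ← mono_ee]
    simp [map_mul, map_ofNat]
    ring
  rw [h1, h2, fyp]

lemma memX3Y (t : ℂ) (htt : t^2 ≠ 4) : (X 0 ^ 3 * X 1 : MvPolynomial (Fin 2) ℂ) ∈ Jp t := by
  have h8 : (8 - 2*t^2 : ℂ) ≠ 0 := by
    intro h; apply htt; linear_combination -h/2
  apply mem_of_C_mul h8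
  have hid : (C (8 - 2*t^2) : MvPolynomial (Fin 2) ℂ) * (X 0^3 * X 1)
      = (2 * X 1) * fxp t - (C t * X 0) * fyp t := by
    simp only [fxp, fyp, map_sub, map_mul, map_ofNat, map_pow]
    ring
  rw [hid]
  exact sub_mem (Ideal.mul_mem_left _ _ (fxp_mem t)) (Ideal.mul_mem_left _ _ (fyp_mem t))

lemma memXY3 (t : ℂ) (htt : t^2 ≠ 4) : (X 0 * X 1 ^ 3 : MvPolynomial (Fin 2) ℂ) ∈ Jp t := by
  have h8 : (8 - 2*t^2 : ℂ) ≠ 0 := by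
    intro h; apply htt; linear_combination -h/2
  apply mem_of_C_mul h8
  have hid : (C (8 - 2*t^2) : MvPolynomial (Fin 2) ℂ) * (X 0 * X 1^3)
      = (2 * X 0) * fyp t - (C t * X 1) * fxp t := by
    simp only [fxp, fyp, map_sub, map_mul, map_ofNat, map_pow]
    ring
  rw [hid]
  exact sub_mem (Ideal.mul_mem_left _ _ (fyp_mem t)) (Ideal.mul_mem_left _ _ (fxp_mem t))

lemma memX5 (t : ℂ) (htt : t^2 ≠ 4) : (X 0 ^ 5 : MvPolynomial (Fin 2) ℂ) ∈ Jp t := by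
  apply mem_of_C_mul (show (4:ℂ) ≠ 0 by norm_num)
  have hid : (C 4 : MvPolynomial (Fin 2) ℂ) * X 0 ^ 5
      = X 0 ^ 2 * fxp t - C (2*t) * (X 1 * (X 0 ^ 3 * X 1)) := by
    simp only [fxp, map_mul, map_ofNat]
    ring
  rw [hid]
  exact sub_mem (Ideal.mul_mem_left _ _ (fxp_mem t))
    (Ideal.mul_mem_left _ _ (Ideal.mul_mem_left _ _ (memX3Y t htt)))

lemma memY5 (t : ℂ) (htt : t^2 ≠ 4) : (X 1 ^ 5 : MvPolynomial (Fin 2) ℂ) ∈ Jp t := by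
  apply mem_of_C_mul (show (4:ℂ) ≠ 0 by norm_num)
  have hid : (C 4 : MvPolynomial (Fin 2) ℂ) * X 1 ^ 5
      = X 1 ^ 2 * fyp t - C (2*t) * (X 0 * (X 0 * X 1 ^ 3)) := by
    simp only [fyp, map_mul, map_ofNat]
    ring
  rw [hid]
  exact sub_mem (Ideal.mul_mem_left _ _ (fyp_mem t))
    (Ideal.mul_mem_left _ _ (Ideal.mul_mem_left _ _ (memXY3 t htt)))

lemma comb30 (t : ℂ) : (2 * X 0 ^ 3 + C t * (X 0 * X 1 ^ 2) : MvPolynomial (Fin 2) ℂ) ∈ Jp t := by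
  apply mem_of_C_mul (show (2:ℂ) ≠ 0 by norm_num)
  have hid : (C 2 : MvPolynomial (Fin 2) ℂ) * (2 * X 0 ^ 3 + C t * (X 0 * X 1 ^ 2)) = fxp t := by
    simp only [fxp, map_ofNat]; ring
  rw [hid]; exact fxp_mem t

lemma comb03 (t : ℂ) : (2 * X 1 ^ 3 + C t * (X 0 ^ 2 * X 1) : MvPolynomial (Fin 2) ℂ) ∈ Jp t := by
  apply mem_of_C_mul (show (2:ℂ) ≠ 0 by norm_num)
  have hid : (C 2 : MvPolynomial (Fin 2) ℂ) * (2 * X 1 ^ 3 + C t * (X 0 ^ 2 * X 1)) = fyp t := by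
    simp only [fyp, map_ofNat]; ring
  rw [hid]; exact fyp_mem t

lemma comb40 (t : ℂ) : (2 * X 0 ^ 4 + C t * (X 0 ^ 2 * X 1 ^ 2) : MvPolynomial (Fin 2) ℂ) ∈ Jp t := by
  apply mem_of_C_mul (show (2:ℂ) ≠ 0 by norm_num)
  have hid : (C 2 : MvPolynomial (Fin 2) ℂ) * (2 * X 0 ^ 4 + C t * (X 0 ^ 2 * X 1 ^ 2))
      = X 0 * fxp t := by
    simp only [fxp, map_ofNat]; ring
  rw [hid]; exact Ideal.mul_mem_left _ _ (fxp_mem t)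

lemma comb04 (t : ℂ) : (2 * X 1 ^ 4 + C t * (X 0 ^ 2 * X 1 ^ 2) : MvPolynomial (Fin 2) ℂ) ∈ Jp t := by
  apply mem_of_C_mul (show (2:ℂ) ≠ 0 by norm_num)
  have hid : (C 2 : MvPolynomial (Fin 2) ℂ) * (2 * X 1 ^ 4 + C t * (X 0 ^ 2 * X 1 ^ 2))
      = X 1 * fyp t := by
    simp only [fyp, map_ofNat]; ring
  rw [hid]; exact Ideal.mul_mem_left _ _ (fyp_mem t)

/-- The normal-form coefficient extractor. -/
def Nc (t : ℂ) : Fin 9 → MvPolynomial (Fin 2) ℂ →ₗ[ℂ] ℂ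
  | 0 => lcoeff ℂ (ee 0 0)
  | 1 => lcoeff ℂ (ee 1 0)
  | 2 => lcoeff ℂ (ee 0 1)
  | 3 => lcoeff ℂ (ee 2 0)
  | 4 => lcoeff ℂ (ee 1 1)
  | 5 => lcoeff ℂ (ee 0 2)
  | 6 => lcoeff ℂ (ee 2 1) + (-(t/2)) • lcoeff ℂ (ee 0 3)
  | 7 => lcoeff ℂ (ee 1 2) + (-(t/2)) • lcoeff ℂ (ee 3 0)
  | 8 => lcoeff ℂ (ee 2 2) + (-(t/2)) • (lcoeff ℂ (ee 4 0) + lcoeff ℂ (ee 0 4))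

def Nmap (t : ℂ) : MvPolynomial (Fin 2) ℂ →ₗ[ℂ] (Fin 9 → ℂ) :=
  LinearMap.pi (Nc t)

lemma Nmap_fx (t : ℂ) (u : MvPolynomial (Fin 2) ℂ) : Nmap t (u * fxp t) = 0 := by
  funext j
  fin_cases j <;>
  · simp [Nmap, Nc, fxp_eq, mul_add, coeff_mul_monomial', ee_le, ee_sub]
    try ring

lemma Nmap_fy (t : ℂ) (u : MvPolynomial (Fin 2) ℂ) : Nmap t (u * fyp t) = 0 := by
  funext j
  fin_cases j <;>
  · simp [Nmap, Nc, fyp_eq, mul_add, coeff_mul_monomial', ee_le, ee_sub]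
    try ring

/-- The exponents of the nine basis monomials. -/
def eta : Fin 9 → (Fin 2 →₀ ℕ)
  | 0 => ee 0 0
  | 1 => ee 1 0
  | 2 => ee 0 1
  | 3 => ee 2 0
  | 4 => ee 1 1
  | 5 => ee 0 2
  | 6 => ee 2 1
  | 7 => ee 1 2
  | 8 => ee 2 2

lemma Nmap_table (t : ℂ) (i : Fin 9) :
    Nmap t (monomial (eta i) 1) = Pi.single i 1 := by
  fin_cases i <;> funext j <;> fin_cases j <;>
    simp [Nmap, Nc, eta, ee_eq, Pi.single_apply]

lemma ee_self (u : Fin 2 →₀ ℕ) : u = ee (u 0) (u 1) := by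
  ext i
  fin_cases i <;> simp [ee_apply0, ee_apply1]

end MilnorAux

set_option maxHeartbeats 1000000 in
/-- Example 2 of the paper: for `f_t = X⁴ + Y⁴ + t·X²Y²` with `t ≠ ±2`, the nine
monomials `1, X, Y, X², XY, Y², X²Y, XY², X²Y²` induce a `ℂ`-basis of the Milnor
algebra `R/J_t`; in particular `dim_ℂ R/J_t = 9`. -/
theorem milnor_algebra_basis (t : ℂ) (ht2 : t ≠ 2) (ht2' : t ≠ -2) :
    let R := MvPolynomial (Fin 2) ℂ
    let fx : R := 4 * X 0 ^ 3 + 2 * C t * X 0 * X 1 ^ 2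
    let fy : R := 4 * X 1 ^ 3 + 2 * C t * X 0 ^ 2 * X 1
    let J : Ideal R := Ideal.span {fx, fy}
    let m : Fin 9 → R :=
      ![1, X 0, X 1, X 0 ^ 2, X 0 * X 1, X 1 ^ 2,
        X 0 ^ 2 * X 1, X 0 * X 1 ^ 2, X 0 ^ 2 * X 1 ^ 2]
    (∃ B : Module.Basis (Fin 9) ℂ (R ⧸ J), ∀ i, B i = Ideal.Quotient.mk J (m i)) ∧
      Module.finrank ℂ (R ⧸ J) = 9 := by
  intro R fx fy J m
  have htt : t ^ 2 ≠ 4 := by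
    intro h
    rcases mul_eq_zero.mp (show (t - 2) * (t + 2) = 0 by linear_combination h) with h' | h'
    · exact ht2 (by linear_combination h')
    · exact ht2' (by linear_combination h')
  have hJ : J = Jp t := rfl
  -- the nine monomials, written as `monomial`s
  have hm : ∀ i, m i = monomial (eta i) 1 := by
    intro i
    fin_cases i
    · show (1 : R) = monomial (ee 0 0) 1; rw [← mono_ee]; simp
    · show (X 0 : R) = monomial (ee 1 0) 1; rw [← mono_ee]; simp
    · show (X 1 : R) = monomial (ee 0 1) 1; rw [← mono_ee]; simp
    · show (X 0 ^ 2 : R) = monomial (ee 2 0) 1; rw [← mono_ee]; simp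
    · show (X 0 * X 1 : R) = monomial (ee 1 1) 1; rw [← mono_ee]; simp
    · show (X 1 ^ 2 : R) = monomial (ee 0 2) 1; rw [← mono_ee]; simp
    · show (X 0 ^ 2 * X 1 : R) = monomial (ee 2 1) 1; rw [← mono_ee]; simp
    · show (X 0 * X 1 ^ 2 : R) = monomial (ee 1 2) 1; rw [← mono_ee]; simp
    · show (X 0 ^ 2 * X 1 ^ 2 : R) = monomial (ee 2 2) 1; rw [← mono_ee]
  -- mk commutes with ℂ-scaling
  have hsmul : ∀ (c : ℂ) (p : R),
      Ideal.Quotient.mk J (C c * p) = c • Ideal.Quotient.mk J p := by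
    intro c p
    rw [← smul_eq_C_mul, ← Ideal.Quotient.mkₐ_eq_mk ℂ J, map_smul]
  -- linear independence
  have hind : LinearIndependent ℂ (fun i => Ideal.Quotient.mk J (m i)) := by
    rw [Fintype.linearIndependent_iff]
    intro g hg i
    set P : R := ∑ i, g i • m i with hP
    have hPJ : P ∈ J := by
      rw [← Ideal.Quotient.eq_zero_iff_mem]
      have h1 : Ideal.Quotient.mk J P = ∑ i, g i • Ideal.Quotient.mk J (m i) := by
        rw [hP, ← Ideal.Quotient.mkₐ_eq_mk ℂ J, map_sum]
        simp_rw [map_smul]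
      rw [h1]
      exact hg
    have hN0 : Nmap t P = 0 := by
      rw [hJ] at hPJ
      obtain ⟨u, w, huw⟩ := Ideal.mem_span_pair.mp hPJ
      rw [← huw, map_add, Nmap_fx, Nmap_fy, add_zero]
    have hNg : Nmap t P = g := by
      rw [hP, map_sum]
      have h2 : ∀ i, Nmap t (g i • m i) = g i • (Pi.single i 1 : Fin 9 → ℂ) := fun i => by
        rw [map_smul, hm, Nmap_table]
      simp_rw [h2]
      funext j
      rw [Finset.sum_apply]
      simp [Pi.single_apply]
    have : g = 0 := hNg.symm.trans hN0
    rw [this]; rfl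
  -- spanning
  have hvmem : ∀ i, Ideal.Quotient.mk J (monomial (eta i) 1) ∈
      Submodule.span ℂ (Set.range fun i => Ideal.Quotient.mk J (m i)) := by
    intro i
    rw [← hm i]
    exact Submodule.subset_span ⟨i, rfl⟩
  have hz : ∀ p : R, p ∈ Jp t → Ideal.Quotient.mk J p ∈
      Submodule.span ℂ (Set.range fun i => Ideal.Quotient.mk J (m i)) := by
    intro p hp
    rw [Ideal.Quotient.eq_zero_iff_mem.mpr (hJ ▸ hp)]
    exact Submodule.zero_mem _
  have key : ∀ (p q : R) (cq : ℂ), (2 * p + C cq * q) ∈ Jp t →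
      Ideal.Quotient.mk J q ∈
        Submodule.span ℂ (Set.range fun i => Ideal.Quotient.mk J (m i)) →
      Ideal.Quotient.mk J p ∈
        Submodule.span ℂ (Set.range fun i => Ideal.Quotient.mk J (m i)) := by
    intro p q cq hmem hq
    have h0 : Ideal.Quotient.mk J (2 * p + C cq * q) = 0 :=
      Ideal.Quotient.eq_zero_iff_mem.mpr (hJ ▸ hmem)
    have h1 : (2:ℂ) • Ideal.Quotient.mk J p + cq • Ideal.Quotient.mk J q = 0 := by
      rw [← hsmul, ← hsmul, ← map_add,
        show (C (2:ℂ) : R) * p + C cq * q = 2 * p + C cq * q by rw [map_ofNat], h0]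
    have h3 : (2:ℂ) • Ideal.Quotient.mk J p = (-cq) • Ideal.Quotient.mk J q := by
      rw [neg_smul]; exact eq_neg_of_add_eq_zero_left h1
    have h4 : Ideal.Quotient.mk J p = ((2:ℂ)⁻¹ * -cq) • Ideal.Quotient.mk J q := by
      rw [mul_smul, ← h3, smul_smul]
      norm_num
    rw [h4]
    exact Submodule.smul_mem _ _ hq
  have hspan : ∀ (a b : ℕ), Ideal.Quotient.mk J (X 0 ^ a * X 1 ^ b) ∈
      Submodule.span ℂ (Set.range fun i => Ideal.Quotient.mk J (m i)) := by
    intro a b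
    by_cases ha3 : 3 ≤ a
    · obtain ⟨a', rfl⟩ := Nat.exists_eq_add_of_le ha3
      by_cases hb1 : 1 ≤ b
      · obtain ⟨b', rfl⟩ := Nat.exists_eq_add_of_le hb1
        apply hz
        rw [show (X 0 ^ (3 + a') * X 1 ^ (1 + b') : R)
          = (X 0 ^ a' * X 1 ^ b') * (X 0 ^ 3 * X 1) by ring]
        exact Ideal.mul_mem_left _ _ (memX3Y t htt)
      · have hb0 : b = 0 := by omega
        subst hb0
        match a' with
        | 0 =>
          rw [show (X 0 ^ (3 + 0) * X 1 ^ 0 : R) = X 0 ^ 3 by ring]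
          refine key _ (X 0 * X 1 ^ 2) t (comb30 t) ?_
          rw [show (X 0 * X 1 ^ 2 : R) = X 0 ^ 1 * X 1 ^ 2 by ring, mono_ee]
          exact hvmem 7
        | 1 =>
          rw [show (X 0 ^ (3 + 1) * X 1 ^ 0 : R) = X 0 ^ 4 by ring]
          refine key _ (X 0 ^ 2 * X 1 ^ 2) t (comb40 t) ?_
          rw [mono_ee]
          exact hvmem 8
        | (a'' + 2) =>
          apply hz
          rw [show (X 0 ^ (3 + (a'' + 2)) * X 1 ^ 0 : R) = X 0 ^ a'' * X 0 ^ 5 by ring]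
          exact Ideal.mul_mem_left _ _ (memX5 t htt)
    · by_cases hb3 : 3 ≤ b
      · obtain ⟨b', rfl⟩ := Nat.exists_eq_add_of_le hb3
        by_cases ha1 : 1 ≤ a
        · obtain ⟨a', rfl⟩ := Nat.exists_eq_add_of_le ha1
          apply hz
          rw [show (X 0 ^ (1 + a') * X 1 ^ (3 + b') : R)
            = (X 0 ^ a' * X 1 ^ b') * (X 0 * X 1 ^ 3) by ring]
          exact Ideal.mul_mem_left _ _ (memXY3 t htt)
        · have ha0 : a = 0 := by omega
          subst ha0
          match b' with
          | 0 =>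
            rw [show (X 0 ^ 0 * X 1 ^ (3 + 0) : R) = X 1 ^ 3 by ring]
            refine key _ (X 0 ^ 2 * X 1) t (comb03 t) ?_
            rw [show (X 0 ^ 2 * X 1 : R) = X 0 ^ 2 * X 1 ^ 1 by ring, mono_ee]
            exact hvmem 6
          | 1 =>
            rw [show (X 0 ^ 0 * X 1 ^ (3 + 1) : R) = X 1 ^ 4 by ring]
            refine key _ (X 0 ^ 2 * X 1 ^ 2) t (comb04 t) ?_
            rw [mono_ee]
            exact hvmem 8
          | (b'' + 2) =>
            apply hz
            rw [show (X 0 ^ 0 * X 1 ^ (3 + (b'' + 2)) : R) = X 1 ^ b'' * X 1 ^ 5 by ring]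
            exact Ideal.mul_mem_left _ _ (memY5 t htt)
      · have ha : a ≤ 2 := by omega
        have hb : b ≤ 2 := by omega
        interval_cases a <;> interval_cases b <;> rw [mono_ee]
        exacts [hvmem 0, hvmem 2, hvmem 5, hvmem 1, hvmem 4, hvmem 7,
          hvmem 3, hvmem 6, hvmem 8]
  have htop : ⊤ ≤ Submodule.span ℂ (Set.range fun i => Ideal.Quotient.mk J (m i)) := by
    intro x _
    obtain ⟨p, rfl⟩ := Ideal.Quotient.mk_surjective x
    induction p using MvPolynomial.induction_on' with
    | monomial u a =>
      have hu : (monomial u a : R) = C a * (X 0 ^ u 0 * X 1 ^ u 1) := by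
        rw [mono_ee, C_mul_monomial, mul_one, ← ee_self u]
      rw [hu, hsmul]
      exact Submodule.smul_mem _ _ (hspan _ _)
    | add p q hp hq =>
      rw [map_add]
      exact Submodule.add_mem _ (hp trivial) (hq trivial)
  refine ⟨⟨Module.Basis.mk hind htop, fun i => Module.Basis.mk_apply _ _ _⟩, ?_⟩
  rw [Module.finrank_eq_card_basis (Module.Basis.mk hind htop), Fintype.card_fin]
end

section
/- Let t ∈ ℂ with t ≠ 2 and t ≠ −2. Then the six monomials X³·Y, X·Y³, X⁵, Y⁵, X³·Y², X²·Y³ all belong to the ideal J_t. -/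
open MvPolynomial

/-- Example 2 of the paper: for `t ≠ ±2`, the monomials `X³Y, XY³, X⁵, Y⁵, X³Y², X²Y³`
belong to the Jacobian ideal `J_t` of `f_t = X⁴ + Y⁴ + t·X²Y²`. -/
theorem monomials_mem_jacobian_ideal (t : ℂ) (ht2 : t ≠ 2) (ht2' : t ≠ -2) :
    let R := MvPolynomial (Fin 2) ℂ
    let fx : R := 4 * X 0 ^ 3 + 2 * C t * X 0 * X 1 ^ 2
    let fy : R := 4 * X 1 ^ 3 + 2 * C t * X 0 ^ 2 * X 1
    let J : Ideal R := Ideal.span {fx, fy}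
    X 0 ^ 3 * X 1 ∈ J ∧ X 0 * X 1 ^ 3 ∈ J ∧ X 0 ^ 5 ∈ J ∧ X 1 ^ 5 ∈ J ∧
      X 0 ^ 3 * X 1 ^ 2 ∈ J ∧ X 0 ^ 2 * X 1 ^ 3 ∈ J := by
  intro R fx fy J
  have hfx : fx ∈ J := Ideal.subset_span (by simp)
  have hfy : fy ∈ J := Ideal.subset_span (by simp)
  have h1 : (2 - t) ≠ 0 := fun h => ht2 (by linear_combination -h)
  have h2 : (2 + t) ≠ 0 := fun h => ht2' (by linear_combination h)
  have hd : (2 * (4 - t ^ 2) : ℂ) ≠ 0 := by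
    have : (2 * (4 - t ^ 2) : ℂ) = 2 * ((2 - t) * (2 + t)) := by ring
    rw [this]
    exact mul_ne_zero two_ne_zero (mul_ne_zero h1 h2)
  have key : ∀ p : R, ∀ c : ℂ, c ≠ 0 → C c * p ∈ J → p ∈ J := by
    intro p c hc h
    have := Ideal.mul_mem_left J (C c⁻¹) h
    rwa [← mul_assoc, ← C_mul, inv_mul_cancel₀ hc, C_1, one_mul] at this
  have hx3y : X 0 ^ 3 * X 1 ∈ J := by
    refine key _ _ hd ?_
    have : (C (2 * (4 - t ^ 2)) : R) * (X 0 ^ 3 * X 1) =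
        2 * X 1 * fx - C t * X 0 * fy := by
      simp only [fx, fy, map_mul, map_sub, map_pow, map_ofNat]
      ring
    rw [this]
    exact sub_mem (Ideal.mul_mem_left _ _ hfx) (Ideal.mul_mem_left _ _ hfy)
  have hxy3 : X 0 * X 1 ^ 3 ∈ J := by
    refine key _ _ hd ?_
    have : (C (2 * (4 - t ^ 2)) : R) * (X 0 * X 1 ^ 3) =
        2 * X 0 * fy - C t * X 1 * fx := by
      simp only [fx, fy, map_mul, map_sub, map_pow, map_ofNat]
      ring
    rw [this]
    exact sub_mem (Ideal.mul_mem_left _ _ hfy) (Ideal.mul_mem_left _ _ hfx)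
  have hx3y2 : X 0 ^ 3 * X 1 ^ 2 ∈ J := by
    have : (X 0 ^ 3 * X 1 ^ 2 : R) = X 1 * (X 0 ^ 3 * X 1) := by ring
    rw [this]; exact Ideal.mul_mem_left _ _ hx3y
  have hx2y3 : X 0 ^ 2 * X 1 ^ 3 ∈ J := by
    have : (X 0 ^ 2 * X 1 ^ 3 : R) = X 0 * (X 0 * X 1 ^ 3) := by ring
    rw [this]; exact Ideal.mul_mem_left _ _ hxy3
  have hx5 : X 0 ^ 5 ∈ J := by
    refine key _ 4 (by norm_num) ?_
    have : (C (4 : ℂ) : R) * X 0 ^ 5 =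
        X 0 ^ 2 * fx - 2 * C t * (X 0 ^ 3 * X 1 ^ 2) := by
      simp only [fx, map_ofNat]
      ring
    rw [this]
    exact sub_mem (Ideal.mul_mem_left _ _ hfx) (Ideal.mul_mem_left _ _ hx3y2)
  have hy5 : X 1 ^ 5 ∈ J := by
    refine key _ 4 (by norm_num) ?_
    have : (C (4 : ℂ) : R) * X 1 ^ 5 =
        X 1 ^ 2 * fy - 2 * C t * (X 0 ^ 2 * X 1 ^ 3) := by
      simp only [fy, map_ofNat]
      ring
    rw [this]
    exact sub_mem (Ideal.mul_mem_left _ _ hfy) (Ideal.mul_mem_left _ _ hx2y3)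
  exact ⟨hx3y, hxy3, hx5, hy5, hx3y2, hx2y3⟩
end

section
/- In the polynomial ring ℂ[X,Y] = MvPolynomial (Fin 2) ℂ, set P := X⁴ + Y⁴ and Q := X²·Y², let 𝔪 := Ideal.span {X, Y}, J(P) := Ideal.span {4X³, 4Y³} (the ideal of partial derivatives of P) and J(Q) := Ideal.span {2XY², 2X²Y} (the ideal of partial derivatives of Q). Then 𝔪²·J(Q) ⊆ 𝔪²·J(P), and Q ∉ J(P), i.e. X²Y² ∉ Ideal.span {X³, Y³}. -/
open MvPolynomial Pointwise

noncomputable abbrev Example2.R' := MvPolynomial (Fin 2) ℂ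

namespace Example2

lemma hJP : (Ideal.span {4 * X 0 ^ 3, 4 * X 1 ^ 3} : Ideal R') = Ideal.span {X 0 ^ 3, X 1 ^ 3} := by
  apply le_antisymm <;> rw [Ideal.span_le] <;> rintro x (rfl | rfl)
  · exact Ideal.mul_mem_left _ _ (Ideal.subset_span (by simp))
  · exact Ideal.mul_mem_left _ _ (Ideal.subset_span (by simp))
  · have h1 : (X 0 ^ 3 : R') = C (1/4) * (4 * X 0 ^ 3) := by
      rw [(map_ofNat C 4).symm, ← mul_assoc, ← C_mul]; norm_num
    have h2 : C ((1:ℂ)/4) * (4 * X 0 ^ 3) ∈ Ideal.span ({4 * X 0 ^ 3, 4 * X 1 ^ 3} : Set R') :=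
      Ideal.mul_mem_left _ _ (Ideal.subset_span (by simp))
    rwa [← h1] at h2
  · have h1 : (X 1 ^ 3 : R') = C (1/4) * (4 * X 1 ^ 3) := by
      rw [(map_ofNat C 4).symm, ← mul_assoc, ← C_mul]; norm_num
    have h2 : C ((1:ℂ)/4) * (4 * X 1 ^ 3) ∈ Ideal.span ({4 * X 0 ^ 3, 4 * X 1 ^ 3} : Set R') :=
      Ideal.mul_mem_left _ _ (Ideal.subset_span (by simp))
    rwa [← h1] at h2

lemma hJQ : (Ideal.span {2 * X 0 * X 1 ^ 2, 2 * X 0 ^ 2 * X 1} : Ideal R') =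
    Ideal.span {X 0 * X 1 ^ 2, X 0 ^ 2 * X 1} := by
  apply le_antisymm <;> rw [Ideal.span_le] <;> rintro x (rfl | rfl)
  · rw [show (2 * X 0 * X 1 ^ 2 : R') = 2 * (X 0 * X 1 ^ 2) by ring]
    exact Ideal.mul_mem_left _ _ (Ideal.subset_span (by simp))
  · rw [show (2 * X 0 ^ 2 * X 1 : R') = 2 * (X 0 ^ 2 * X 1) by ring]
    exact Ideal.mul_mem_left _ _ (Ideal.subset_span (by simp))
  · have h1 : (X 0 * X 1 ^ 2 : R') = C (1/2) * (2 * X 0 * X 1 ^ 2) := by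
      rw [(map_ofNat C 2).symm, ← mul_assoc, ← mul_assoc, ← C_mul]; norm_num
    have h2 : C ((1:ℂ)/2) * (2 * X 0 * X 1 ^ 2) ∈
        Ideal.span ({2 * X 0 * X 1 ^ 2, 2 * X 0 ^ 2 * X 1} : Set R') :=
      Ideal.mul_mem_left _ _ (Ideal.subset_span (by simp))
    rwa [← h1] at h2
  · have h1 : (X 0 ^ 2 * X 1 : R') = C (1/2) * (2 * X 0 ^ 2 * X 1) := by
      rw [(map_ofNat C 2).symm, ← mul_assoc, ← mul_assoc, ← C_mul]; norm_num
    have h2 : C ((1:ℂ)/2) * (2 * X 0 ^ 2 * X 1) ∈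
        Ideal.span ({2 * X 0 * X 1 ^ 2, 2 * X 0 ^ 2 * X 1} : Set R') :=
      Ideal.mul_mem_left _ _ (Ideal.subset_span (by simp))
    rwa [← h1] at h2

lemma main_incl :
    (Ideal.span {X 0, X 1} : Ideal R') ^ 2 * Ideal.span {X 0 * X 1 ^ 2, X 0 ^ 2 * X 1} ≤
      Ideal.span {X 0, X 1} ^ 2 * Ideal.span {X 0 ^ 3, X 1 ^ 3} := by
  rw [pow_two, Ideal.span_mul_span', Ideal.span_mul_span']
  rw [Ideal.span_le]
  rintro x ⟨a, ⟨u, hu, v, hv, rfl⟩, q, hq, rfl⟩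
  simp only [Set.mem_insert_iff, Set.mem_singleton_iff] at hu hv hq
  have key : ∀ m g : R', m ∈ (({X 0, X 1} : Set R') * ({X 0, X 1} : Set R')) →
      g ∈ ({X 0 ^ 3, X 1 ^ 3} : Set R') →
      m * g ∈ Ideal.span (({X 0, X 1} : Set R') * ({X 0, X 1} : Set R')) *
        Ideal.span ({X 0 ^ 3, X 1 ^ 3} : Set R') :=
    fun m g hm hg => Ideal.mul_mem_mul (Ideal.subset_span hm) (Ideal.subset_span hg)
  have hxx : (X 0 * X 0 : R') ∈ (({X 0, X 1} : Set R') * ({X 0, X 1} : Set R')) :=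
    ⟨_, by simp, _, by simp, rfl⟩
  have hxy : (X 0 * X 1 : R') ∈ (({X 0, X 1} : Set R') * ({X 0, X 1} : Set R')) :=
    ⟨_, by simp, _, by simp, rfl⟩
  have hyy : (X 1 * X 1 : R') ∈ (({X 0, X 1} : Set R') * ({X 0, X 1} : Set R')) :=
    ⟨_, by simp, _, by simp, rfl⟩
  have h0 : (X 0 ^ 3 : R') ∈ ({X 0 ^ 3, X 1 ^ 3} : Set R') := by simp
  have h1 : (X 1 ^ 3 : R') ∈ ({X 0 ^ 3, X 1 ^ 3} : Set R') := by simp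
  rcases hu with rfl | rfl <;> rcases hv with rfl | rfl <;> rcases hq with rfl | rfl
  · beta_reduce
    rw [show ((X 0 * X 0 * (X 0 * X 1 ^ 2) : R') = (X 1 * X 1) * X 0 ^ 3) by ring]
    exact key _ _ hyy h0
  · beta_reduce
    rw [show ((X 0 * X 0 * (X 0 ^ 2 * X 1) : R') = (X 0 * X 1) * X 0 ^ 3) by ring]
    exact key _ _ hxy h0
  · beta_reduce
    rw [show ((X 0 * X 1 * (X 0 * X 1 ^ 2) : R') = (X 0 * X 0) * X 1 ^ 3) by ring]
    exact key _ _ hxx h1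
  · beta_reduce
    rw [show ((X 0 * X 1 * (X 0 ^ 2 * X 1) : R') = (X 1 * X 1) * X 0 ^ 3) by ring]
    exact key _ _ hyy h0
  · beta_reduce
    rw [show ((X 1 * X 0 * (X 0 * X 1 ^ 2) : R') = (X 0 * X 0) * X 1 ^ 3) by ring]
    exact key _ _ hxx h1
  · beta_reduce
    rw [show ((X 1 * X 0 * (X 0 ^ 2 * X 1) : R') = (X 1 * X 1) * X 0 ^ 3) by ring]
    exact key _ _ hyy h0
  · beta_reduce
    rw [show ((X 1 * X 1 * (X 0 * X 1 ^ 2) : R') = (X 0 * X 1) * X 1 ^ 3) by ring]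
    exact key _ _ hxy h1
  · beta_reduce
    rw [show ((X 1 * X 1 * (X 0 ^ 2 * X 1) : R') = (X 0 * X 0) * X 1 ^ 3) by ring]
    exact key _ _ hxx h1

end Example2

/-- Verification of the hypothesis of the Lemma of Example 1 for Example 2 of the paper:
with `P = X⁴ + Y⁴`, `Q = X²Y²`, one has `𝔪²·J(Q) ⊆ 𝔪²·J(P)` and `Q ∉ J(P)`. -/
theorem example2_hypotheses :
    let R := MvPolynomial (Fin 2) ℂ
    let 𝔪 : Ideal R := Ideal.span {X 0, X 1}
    let JP : Ideal R := Ideal.span {4 * X 0 ^ 3, 4 * X 1 ^ 3}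
    let JQ : Ideal R := Ideal.span {2 * X 0 * X 1 ^ 2, 2 * X 0 ^ 2 * X 1}
    𝔪 ^ 2 * JQ ≤ 𝔪 ^ 2 * JP ∧
      X 0 ^ 2 * X 1 ^ 2 ∉ Ideal.span ({X 0 ^ 3, X 1 ^ 3} : Set R) := by
  refine ⟨?_, ?_⟩
  · show (Ideal.span {X 0, X 1} : Ideal Example2.R') ^ 2 *
        Ideal.span {2 * X 0 * X 1 ^ 2, 2 * X 0 ^ 2 * X 1} ≤
      Ideal.span {X 0, X 1} ^ 2 * Ideal.span {4 * X 0 ^ 3, 4 * X 1 ^ 3}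
    rw [Example2.hJP, Example2.hJQ]
    exact Example2.main_incl
  · intro h
    rw [Ideal.mem_span_pair] at h
    obtain ⟨u, v, huv⟩ := h
    have := congrArg (coeff (Finsupp.single 0 2 + Finsupp.single 1 2)) huv
    simp only [coeff_add, X_pow_eq_monomial, coeff_mul_monomial', Finsupp.single_le_iff,
      Finsupp.add_apply, Finsupp.single_apply] at this
    norm_num at this
end

section
/- Let p, q, r ≥ 3 be integers. In A = MvPolynomial (Fin 4) ℂ one has t³·x·y·z² + (p·q·r)·x^{p−2}·y^{q−2}·z^{r−1} ∈ 𝔐²·J. -/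
open MvPolynomial

/-- Relation (@) of Example 3 of the paper:
`t³·xyz² + pqr·x^{p−2}·y^{q−2}·z^{r−1} ∈ 𝔐²·J` for `f = x^p + y^q + z^r + t·xyz`,
`p,q,r ≥ 3`. -/
theorem example3_key_congruence (p q r : ℕ) (hp : 3 ≤ p) (hq : 3 ≤ q) (hr : 3 ≤ r) :
    let A := MvPolynomial (Fin 4) ℂ
    let x : A := X 0
    let y : A := X 1
    let z : A := X 2
    let t : A := X 3
    let fx : A := (p : A) * x ^ (p - 1) + t * y * z
    let fy : A := (q : A) * y ^ (q - 1) + t * x * z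
    let fz : A := (r : A) * z ^ (r - 1) + t * x * y
    let 𝔐 : Ideal A := Ideal.span {x, y, z}
    let J : Ideal A := Ideal.span {fx, fy, fz}
    t ^ 3 * (x * y * z ^ 2) + (p * q * r : ℕ) • (x ^ (p - 2) * y ^ (q - 2) * z ^ (r - 1))
      ∈ 𝔐 ^ 2 * J := by
  intro A x y z t fx fy fz 𝔐 J
  have hx : x ∈ 𝔐 := Ideal.subset_span (by simp)
  have hy : y ∈ 𝔐 := Ideal.subset_span (by simp)
  have hz : z ∈ 𝔐 := Ideal.subset_span (by simp)
  have hfx : fx ∈ J := Ideal.subset_span (by simp)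
  have hfy : fy ∈ J := Ideal.subset_span (by simp)
  have hfz : fz ∈ J := Ideal.subset_span (by simp)
  have hM2 : 𝔐 ^ 2 = 𝔐 * 𝔐 := sq 𝔐
  -- the three coefficients, each in 𝔐²
  have m1 : (p : A) * (q : A) * (x ^ (p - 2) * y ^ (q - 2)) ∈ 𝔐 ^ 2 := by
    rw [hM2]
    exact Ideal.mul_mem_left _ _
      (Ideal.mul_mem_mul (Ideal.pow_mem_of_mem 𝔐 hx _ (by omega))
        (Ideal.pow_mem_of_mem 𝔐 hy _ (by omega)))
  have m2 : t ^ 2 * (y * z) ∈ 𝔐 ^ 2 := by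
    rw [hM2]
    exact Ideal.mul_mem_left _ _ (Ideal.mul_mem_mul hy hz)
  have m3 : (q : A) * t * y ^ (q - 1) ∈ 𝔐 ^ 2 := by
    rw [hM2]
    have : y ^ (q - 1) = y * y ^ (q - 2) := by
      rw [← pow_succ']; congr 1; omega
    rw [this]
    exact Ideal.mul_mem_left _ _
      (Ideal.mul_mem_mul hy (Ideal.pow_mem_of_mem 𝔐 hy _ (by omega)))
  have key : t ^ 3 * (x * y * z ^ 2)
      + (p * q * r : ℕ) • (x ^ (p - 2) * y ^ (q - 2) * z ^ (r - 1))
      = ((p : A) * (q : A) * (x ^ (p - 2) * y ^ (q - 2))) * fz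
        + (t ^ 2 * (y * z)) * fy - ((q : A) * t * y ^ (q - 1)) * fx := by
    have e1 : x ^ (p - 1) = x ^ (p - 2) * x := by rw [← pow_succ]; congr 1; omega
    have e2 : y ^ (q - 1) = y ^ (q - 2) * y := by rw [← pow_succ]; congr 1; omega
    show _ = _ * ((r : A) * z ^ (r - 1) + t * x * y)
        + _ * ((q : A) * y ^ (q - 1) + t * x * z)
        - _ * ((p : A) * x ^ (p - 1) + t * y * z)
    rw [nsmul_eq_mul, e1, e2]
    push_cast
    ring
  rw [key]
  exact sub_mem (add_mem (Ideal.mul_mem_mul m1 hfz) (Ideal.mul_mem_mul m2 hfy))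
    (Ideal.mul_mem_mul m3 hfx)
end

section
/- Let p, q, r ≥ 3 be integers with 1/p + 1/q + 1/r < 1, and let c ∈ ℂ with c ≠ 0. Let R = MvPolynomial (Fin 3) ℂ with variables x, y, z, let f := x^p + y^q + z^r + c·x·y·z, let 𝔭 := Ideal.span {x, y, z} (a prime ideal of R), let S := Localization.AtPrime R 𝔭 with canonical map φ : R → S, let 𝔪 be the maximal ideal of the local ring S, and let J := Ideal.span {φ(f_x), φ(f_y), φ(f_z)} where f_x = p·x^{p−1} + c·y·z, f_y = q·y^{q−1} + c·x·z, f_z = r·z^{r−1} + c·x·y. Then 𝔪·Ideal.span {φ(x·y·z)} ⊆ 𝔪²·J and 𝔪·Ideal.span {φ(f)} ⊆ 𝔪²·J. -/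
open MvPolynomial

set_option maxHeartbeats 2000000 in
/-- Conclusion of Example 3 of the paper: for `f = x^p + y^q + z^r + c·xyz` with
`p,q,r ≥ 3`, `1/p + 1/q + 1/r < 1` and `c ≠ 0`, in the local ring at the origin
(the localization of `ℂ[x,y,z]` at the prime `(x,y,z)`) one has
`𝔪·(xyz) ⊆ 𝔪²·J` and `𝔪·(f) ⊆ 𝔪²·J` where `J` is the Jacobian ideal. -/
theorem example3_conclusion (p q r : ℕ) (hp : 3 ≤ p) (hq : 3 ≤ q) (hr : 3 ≤ r)
    (hρ : (1 / p + 1 / q + 1 / r : ℝ) < 1)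
    (c : ℂ) (hc : c ≠ 0)
    (𝔭 : Ideal (MvPolynomial (Fin 3) ℂ))
    (h𝔭 : 𝔭 = Ideal.span {X 0, X 1, X 2}) [𝔭.IsPrime] :
    let R := MvPolynomial (Fin 3) ℂ
    let x : R := X 0
    let y : R := X 1
    let z : R := X 2
    let f : R := x ^ p + y ^ q + z ^ r + C c * (x * y * z)
    let fx : R := (p : R) * x ^ (p - 1) + C c * (y * z)
    let fy : R := (q : R) * y ^ (q - 1) + C c * (x * z)
    let fz : R := (r : R) * z ^ (r - 1) + C c * (x * y)
    let S := Localization.AtPrime 𝔭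
    let φ : R →+* S := algebraMap R S
    let 𝔪 : Ideal S := IsLocalRing.maximalIdeal S
    let J : Ideal S := Ideal.span {φ fx, φ fy, φ fz}
    𝔪 * Ideal.span {φ (x * y * z)} ≤ 𝔪 ^ 2 * J ∧
      𝔪 * Ideal.span {φ f} ≤ 𝔪 ^ 2 * J := by
  obtain ⟨a, rfl⟩ : ∃ a, p = a + 3 := ⟨p - 3, by omega⟩
  obtain ⟨b, rfl⟩ : ∃ b, q = b + 3 := ⟨q - 3, by omega⟩
  obtain ⟨d, rfl⟩ : ∃ d, r = d + 3 := ⟨r - 3, by omega⟩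
  intro R x y z f fx fy fz S φ 𝔪 J
  have hx : x = X 0 := rfl
  have hy : y = X 1 := rfl
  have hz : z = X 2 := rfl
  have hfx : fx = ((a + 3 : ℕ) : R) * x ^ (a + 2) + C c * (y * z) := rfl
  have hfy : fy = ((b + 3 : ℕ) : R) * y ^ (b + 2) + C c * (x * z) := rfl
  have hfz : fz = ((d + 3 : ℕ) : R) * z ^ (d + 2) + C c * (x * y) := rfl
  have hf : f = x ^ (a + 3) + y ^ (b + 3) + z ^ (d + 3) + C c * (x * y * z) := rfl
  -- not all of p, q, r equal 3
  have habd : 0 < a ∨ 0 < b ∨ 0 < d := by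
    by_contra h
    push_neg at h
    obtain ⟨h1, h2, h3⟩ := h
    obtain rfl : a = 0 := by omega
    obtain rfl : b = 0 := by omega
    obtain rfl : d = 0 := by omega
    norm_num at hρ
  set s₃ : R := ((a + 3 : ℕ) : R) * ((b + 3 : ℕ) : R) * ((d + 3 : ℕ) : R) with hs₃
  set s₂ : R := C c * (C c ^ 3 + s₃ * (x ^ a * y ^ b * z ^ d)) with hs₂
  have hker : Ideal.span {(X 0 : R), X 1, X 2} ≤
      RingHom.ker (eval (fun _ : Fin 3 => (0 : ℂ))) := by
    rw [Ideal.span_le]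
    rintro g hg
    simp only [Set.mem_insert_iff, Set.mem_singleton_iff] at hg
    rcases hg with rfl | rfl | rfl <;> simp [RingHom.mem_ker]
  have hs₂P : s₂ ∉ 𝔭 := by
    rw [h𝔭]
    intro hmem
    have h0 := hker hmem
    rw [RingHom.mem_ker, hs₂, hs₃, hx, hy, hz] at h0
    simp only [map_mul, map_add, map_pow, eval_C, eval_X, map_natCast] at h0
    rcases habd with h' | h' | h' <;>
      simp [zero_pow h'.ne', hc, pow_eq_zero_iff] at h0
  have hs₃P : s₃ ∉ 𝔭 := by
    rw [h𝔭]
    intro hmem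
    have h0 := hker hmem
    rw [RingHom.mem_ker, hs₃] at h0
    simp only [map_mul, map_natCast] at h0
    have := mul_ne_zero (mul_ne_zero
      (Nat.cast_ne_zero (R := ℂ).mpr (by omega : a + 3 ≠ 0))
      (Nat.cast_ne_zero (R := ℂ).mpr (by omega : b + 3 ≠ 0)))
      (Nat.cast_ne_zero (R := ℂ).mpr (by omega : d + 3 ≠ 0))
    exact this h0
  have hunit₂ : IsUnit (φ s₂) :=
    IsLocalization.map_units (M := 𝔭.primeCompl) (Localization.AtPrime 𝔭) ⟨s₂, hs₂P⟩
  have hunit₃ : IsUnit (φ s₃) :=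
    IsLocalization.map_units (M := 𝔭.primeCompl) (Localization.AtPrime 𝔭) ⟨s₃, hs₃P⟩
  have h𝔪span : 𝔪 = Ideal.span {φ x, φ y, φ z} := by
    have h1 : Ideal.map φ 𝔭 = 𝔪 := Localization.AtPrime.map_eq_maximalIdeal
    have h2 : Ideal.map φ 𝔭 = Ideal.map φ (Ideal.span {X 0, X 1, X 2}) :=
      congrArg (Ideal.map φ) h𝔭
    rw [← h1, h2, Ideal.map_span]
    congr 1
    rw [Set.image_insert_eq, Set.image_insert_eq, Set.image_singleton]
  have hx𝔪 : φ x ∈ 𝔪 := by rw [h𝔪span]; exact Ideal.subset_span (by simp)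
  have hy𝔪 : φ y ∈ 𝔪 := by rw [h𝔪span]; exact Ideal.subset_span (by simp)
  have hz𝔪 : φ z ∈ 𝔪 := by rw [h𝔪span]; exact Ideal.subset_span (by simp)
  have hfxJ : φ fx ∈ J := Ideal.subset_span (by simp)
  have hfyJ : φ fy ∈ J := Ideal.subset_span (by simp)
  have hfzJ : φ fz ∈ J := Ideal.subset_span (by simp)
  have hM2 : ∀ (A u v : S), u ∈ 𝔪 → v ∈ 𝔪 → A * (u * v) ∈ 𝔪 ^ 2 := by
    intro A u v hu hv
    rw [sq]
    exact Ideal.mul_mem_left _ _ (Ideal.mul_mem_mul hu hv)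
  have hfx2 : φ fx ∈ 𝔪 ^ 2 := by
    rw [show fx = ((a + 3 : ℕ) : R) * x ^ a * (x * x) + C c * (y * z) from by
      rw [hfx]; ring]
    simp only [map_add, map_mul]
    exact add_mem (hM2 _ _ _ hx𝔪 hx𝔪) (hM2 _ _ _ hy𝔪 hz𝔪)
  have hfy2 : φ fy ∈ 𝔪 ^ 2 := by
    rw [show fy = ((b + 3 : ℕ) : R) * y ^ b * (y * y) + C c * (x * z) from by
      rw [hfy]; ring]
    simp only [map_add, map_mul]
    exact add_mem (hM2 _ _ _ hy𝔪 hy𝔪) (hM2 _ _ _ hx𝔪 hz𝔪)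
  have hfz2 : φ fz ∈ 𝔪 ^ 2 := by
    rw [show fz = ((d + 3 : ℕ) : R) * z ^ d * (z * z) + C c * (x * y) from by
      rw [hfz]; ring]
    simp only [map_add, map_mul]
    exact add_mem (hM2 _ _ _ hz𝔪 hz𝔪) (hM2 _ _ _ hx𝔪 hy𝔪)
  -- the three key memberships coming from the unit trick
  have hA : φ (x * (x * y * z)) ∈ 𝔪 ^ 2 * J := by
    rw [← Ideal.unit_mul_mem_iff_mem _ hunit₂, ← map_mul]
    rw [show s₂ * (x * (x * y * z)) =
        (C c ^ 2 * fy - C c ^ 2 * (((b + 3 : ℕ) : R) * y ^ b) * (y * y)) * fz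
        + (-(C c ^ 2 * (((d + 3 : ℕ) : R) * z ^ d) * (z * z))) * fy
        + (((b + 3 : ℕ) : R) * ((d + 3 : ℕ) : R) * (y ^ b * z ^ d) * fx
            - ((a + 3 : ℕ) : R) * ((b + 3 : ℕ) : R) * ((d + 3 : ℕ) : R)
              * (x ^ a * y ^ b * z ^ d) * (x * x)) * fx from by
      rw [hs₂, hs₃, hfx, hfy, hfz]; ring]
    simp only [map_add, map_mul, map_sub, map_neg, map_pow]
    refine add_mem (add_mem (Ideal.mul_mem_mul ?_ hfzJ) (Ideal.mul_mem_mul ?_ hfyJ))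
      (Ideal.mul_mem_mul ?_ hfxJ)
    · exact sub_mem (Ideal.mul_mem_left _ _ hfy2) (hM2 _ _ _ hy𝔪 hy𝔪)
    · exact neg_mem (hM2 _ _ _ hz𝔪 hz𝔪)
    · exact sub_mem (Ideal.mul_mem_left _ _ hfx2) (hM2 _ _ _ hx𝔪 hx𝔪)
  have hB : φ (y * (x * y * z)) ∈ 𝔪 ^ 2 * J := by
    rw [← Ideal.unit_mul_mem_iff_mem _ hunit₂, ← map_mul]
    rw [show s₂ * (y * (x * y * z)) =
        (C c ^ 2 * fx - C c ^ 2 * (((a + 3 : ℕ) : R) * x ^ a) * (x * x)) * fz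
        + (-(C c ^ 2 * (((d + 3 : ℕ) : R) * z ^ d) * (z * z))) * fx
        + (((a + 3 : ℕ) : R) * ((d + 3 : ℕ) : R) * (x ^ a * z ^ d) * fy
            - ((a + 3 : ℕ) : R) * ((b + 3 : ℕ) : R) * ((d + 3 : ℕ) : R)
              * (x ^ a * y ^ b * z ^ d) * (y * y)) * fy from by
      rw [hs₂, hs₃, hfx, hfy, hfz]; ring]
    simp only [map_add, map_mul, map_sub, map_neg, map_pow]
    refine add_mem (add_mem (Ideal.mul_mem_mul ?_ hfzJ) (Ideal.mul_mem_mul ?_ hfxJ))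
      (Ideal.mul_mem_mul ?_ hfyJ)
    · exact sub_mem (Ideal.mul_mem_left _ _ hfx2) (hM2 _ _ _ hx𝔪 hx𝔪)
    · exact neg_mem (hM2 _ _ _ hz𝔪 hz𝔪)
    · exact sub_mem (Ideal.mul_mem_left _ _ hfy2) (hM2 _ _ _ hy𝔪 hy𝔪)
  have hC : φ (z * (x * y * z)) ∈ 𝔪 ^ 2 * J := by
    rw [← Ideal.unit_mul_mem_iff_mem _ hunit₂, ← map_mul]
    rw [show s₂ * (z * (x * y * z)) =
        (C c ^ 2 * fx - C c ^ 2 * (((a + 3 : ℕ) : R) * x ^ a) * (x * x)) * fy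
        + (-(C c ^ 2 * (((b + 3 : ℕ) : R) * y ^ b) * (y * y))) * fx
        + (((a + 3 : ℕ) : R) * ((b + 3 : ℕ) : R) * (x ^ a * y ^ b) * fz
            - ((a + 3 : ℕ) : R) * ((b + 3 : ℕ) : R) * ((d + 3 : ℕ) : R)
              * (x ^ a * y ^ b * z ^ d) * (z * z)) * fz from by
      rw [hs₂, hs₃, hfx, hfy, hfz]; ring]
    simp only [map_add, map_mul, map_sub, map_neg, map_pow]
    refine add_mem (add_mem (Ideal.mul_mem_mul ?_ hfyJ) (Ideal.mul_mem_mul ?_ hfxJ))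
      (Ideal.mul_mem_mul ?_ hfzJ)
    · exact sub_mem (Ideal.mul_mem_left _ _ hfx2) (hM2 _ _ _ hx𝔪 hx𝔪)
    · exact neg_mem (hM2 _ _ _ hy𝔪 hy𝔪)
    · exact sub_mem (Ideal.mul_mem_left _ _ hfz2) (hM2 _ _ _ hz𝔪 hz𝔪)
  -- main lemma: 𝔪 · (xyz) ⊆ 𝔪² J elementwise
  have hmain1 : ∀ m ∈ 𝔪, m * φ (x * y * z) ∈ 𝔪 ^ 2 * J := by
    intro m hm
    rw [h𝔪span] at hm
    refine Submodule.span_induction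
      (p := fun n _ => n * φ (x * y * z) ∈ 𝔪 ^ 2 * J) ?_
      (by show (0 : S) * φ (x * y * z) ∈ 𝔪 ^ 2 * J; rw [zero_mul]; exact zero_mem _)
      (fun u v _ _ ihu ihv => by
        show (u + v) * φ (x * y * z) ∈ 𝔪 ^ 2 * J
        rw [add_mul]; exact add_mem ihu ihv)
      (fun t u _ ihu => by
        show (t • u) * φ (x * y * z) ∈ 𝔪 ^ 2 * J
        rw [smul_mul_assoc]; exact Submodule.smul_mem _ _ ihu) hm
    rintro g hg
    simp only [Set.mem_insert_iff, Set.mem_singleton_iff] at hg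
    rcases hg with rfl | rfl | rfl
    · show φ x * φ (x * y * z) ∈ 𝔪 ^ 2 * J
      rw [← map_mul]; exact hA
    · show φ y * φ (x * y * z) ∈ 𝔪 ^ 2 * J
      rw [← map_mul]; exact hB
    · show φ z * φ (x * y * z) ∈ 𝔪 ^ 2 * J
      rw [← map_mul]; exact hC
  have hKm : ∀ (A u v g : S), u ∈ 𝔪 → v ∈ 𝔪 → g ∈ J → u * (A * v * g) ∈ 𝔪 ^ 2 * J := by
    intro A u v g hu hv hg
    rw [show u * (A * v * g) = A * (u * v) * g by ring]
    exact Ideal.mul_mem_mul (hM2 _ _ _ hu hv) hg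
  have hmain2 : ∀ m ∈ 𝔪, m * φ f ∈ 𝔪 ^ 2 * J := by
    intro m hm
    rw [← Ideal.unit_mul_mem_iff_mem _ hunit₃]
    rw [mul_left_comm, ← map_mul]
    rw [show s₃ * f =
        (((b + 3 : ℕ) : R) * ((d + 3 : ℕ) : R) * x) * fx
        + (((a + 3 : ℕ) : R) * ((d + 3 : ℕ) : R) * y) * fy
        + (((a + 3 : ℕ) : R) * ((b + 3 : ℕ) : R) * z) * fz
        + (C c * s₃ - C c * (((b + 3 : ℕ) : R) * ((d + 3 : ℕ) : R)
            + ((a + 3 : ℕ) : R) * ((d + 3 : ℕ) : R)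
            + ((a + 3 : ℕ) : R) * ((b + 3 : ℕ) : R))) * (x * y * z) from by
      rw [hs₃, hf, hfx, hfy, hfz]; ring]
    simp only [map_add, map_mul, map_sub]
    rw [mul_add, mul_add, mul_add]
    refine add_mem (add_mem (add_mem ?_ ?_) ?_) ?_
    · exact hKm _ _ _ _ hm hx𝔪 hfxJ
    · exact hKm _ _ _ _ hm hy𝔪 hfyJ
    · exact hKm _ _ _ _ hm hz𝔪 hfzJ
    · rw [mul_left_comm]
      refine Ideal.mul_mem_left _ _ ?_
      rw [show φ x * φ y * φ z = φ (x * y * z) from by rw [map_mul, map_mul]]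
      exact hmain1 m hm
  constructor
  · refine Ideal.mul_le.mpr fun m hm n hn => ?_
    obtain ⟨t, rfl⟩ := Ideal.mem_span_singleton'.mp hn
    rw [mul_left_comm]
    exact Ideal.mul_mem_left _ _ (hmain1 m hm)
  · refine Ideal.mul_le.mpr fun m hm n hn => ?_
    obtain ⟨t, rfl⟩ := Ideal.mem_span_singleton'.mp hn
    rw [mul_left_comm]
    exact Ideal.mul_mem_left _ _ (hmain2 m hm)
end

section
/- Let n, k ∈ ℕ and let A := MvPowerSeries (Fin (n+1)) ℂ, a local ring; write T for the last variable (index Fin.last n) and regard each MvPolynomial (Fin (n+1)) ℂ as an element of A. Let P, Q ∈ MvPolynomial (Fin (n+1)) ℂ satisfy pderiv (Fin.last n) P = 0 and pderiv (Fin.last n) Q = 0 (they do not involve T), and set f := P + T·Q. In A define 𝔐 := Ideal.span { X i : i ≠ Fin.last n }, J(P) := Ideal.span { pderiv i P : i ≠ Fin.last n }, J(Q) := Ideal.span { pderiv i Q : i ≠ Fin.last n }, and J_/(f) := Ideal.span { pderiv i f : i ≠ Fin.last n } (all generators taken as elements of A). If 𝔐^{k+1}·J(Q) ⊆ 𝔐^{k+1}·J(P),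 then 𝔐^{k+1}·J_/(f) = 𝔐^{k+1}·J(P). If moreover Q ∈ 𝔐·J(Q), then 𝔐^{k}·Ideal.span {Q} ⊆ 𝔐^{k+1}·J_/(f). -/
set_option maxHeartbeats 1000000


open MvPolynomial

/-- Formal-power-series version of the Lemma of Example 1 of the paper: for a
deformation `f = P + T·Q` (with `P, Q` not involving the last variable `T`),
if `𝔐^{k+1}·J(Q) ⊆ 𝔐^{k+1}·J(P)` then `𝔐^{k+1}·J_/(f) = 𝔐^{k+1}·J(P)`;
if moreover `Q ∈ 𝔐·J(Q)` then `𝔐^k·(Q) ⊆ 𝔐^{k+1}·J_/(f)`. -/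
theorem deformation_jacobian_ideal (n k : ℕ)
    (P Q : MvPolynomial (Fin (n + 1)) ℂ)
    (hP : pderiv (Fin.last n) P = 0) (hQ : pderiv (Fin.last n) Q = 0) :
    let A := MvPowerSeries (Fin (n + 1)) ℂ
    let f : MvPolynomial (Fin (n + 1)) ℂ := P + X (Fin.last n) * Q
    let 𝔐 : Ideal A :=
      Ideal.span {g : A | ∃ i, i ≠ Fin.last n ∧ g = MvPowerSeries.X i}
    let JP : Ideal A :=
      Ideal.span {g : A | ∃ i, i ≠ Fin.last n ∧ g = ↑(pderiv i P)}
    let JQ : Ideal A :=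
      Ideal.span {g : A | ∃ i, i ≠ Fin.last n ∧ g = ↑(pderiv i Q)}
    let Jf : Ideal A :=
      Ideal.span {g : A | ∃ i, i ≠ Fin.last n ∧ g = ↑(pderiv i f)}
    𝔐 ^ (k + 1) * JQ ≤ 𝔐 ^ (k + 1) * JP →
      (𝔐 ^ (k + 1) * Jf = 𝔐 ^ (k + 1) * JP ∧
        ((↑Q : A) ∈ 𝔐 * JQ →
          𝔐 ^ k * Ideal.span {(↑Q : A)} ≤ 𝔐 ^ (k + 1) * Jf)) := by
  intro A f 𝔐 JP JQ Jf hJQP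
  set T : A := MvPowerSeries.X (Fin.last n) with hTdef
  -- the key formula for the partials of f
  have hgen : ∀ i : Fin (n + 1), i ≠ Fin.last n →
      (↑(pderiv i f) : A) = ↑(pderiv i P) + T * ↑(pderiv i Q) := by
    intro i hi
    have : pderiv i f = pderiv i P + X (Fin.last n) * pderiv i Q := by
      simp only [f, map_add, pderiv_mul, pderiv_X, Pi.single_apply]
      rw [if_neg (Ne.symm hi)]
      ring
    rw [this, MvPolynomial.coe_add, MvPolynomial.coe_mul, MvPolynomial.coe_X]
  -- span {T} * JQ is absorbed appropriately
  have hTJQ : ∀ i : Fin (n + 1), i ≠ Fin.last n →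
      T * (↑(pderiv i Q) : A) ∈ Ideal.span {T} * JQ := by
    intro i hi
    exact Ideal.mul_mem_mul (Ideal.subset_span rfl) (Ideal.subset_span ⟨i, hi, rfl⟩)
  have hfle : Jf ≤ JP ⊔ Ideal.span {T} * JQ := by
    rw [Ideal.span_le]
    rintro g ⟨i, hi, rfl⟩
    rw [hgen i hi]
    exact Submodule.add_mem _ (Ideal.mem_sup_left (Ideal.subset_span ⟨i, hi, rfl⟩))
      (Ideal.mem_sup_right (hTJQ i hi))
  have hPle : JP ≤ Jf ⊔ Ideal.span {T} * JQ := by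
    rw [Ideal.span_le]
    rintro g ⟨i, hi, rfl⟩
    have : (↑(pderiv i P) : A) = ↑(pderiv i f) - T * ↑(pderiv i Q) := by
      rw [hgen i hi]; ring
    rw [this]
    exact Submodule.sub_mem _ (Ideal.mem_sup_left (Ideal.subset_span ⟨i, hi, rfl⟩))
      (Ideal.mem_sup_right (hTJQ i hi))
  set M : Ideal A := 𝔐 ^ (k + 1) with hMdef
  -- M * ((T) * J) rearrangement
  have hre : ∀ J : Ideal A, M * (Ideal.span {T} * J) = Ideal.span {T} * (M * J) := by
    intro J; ring
  -- forward inclusion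
  have h1 : M * Jf ≤ M * JP := by
    calc M * Jf ≤ M * (JP ⊔ Ideal.span {T} * JQ) := Ideal.mul_mono_right hfle
      _ = M * JP ⊔ Ideal.span {T} * (M * JQ) := by rw [Ideal.mul_sup, hre]
      _ ≤ M * JP ⊔ Ideal.span {T} * (M * JP) :=
          sup_le_sup_left (Ideal.mul_mono_right hJQP) _
      _ ≤ M * JP := sup_le le_rfl Ideal.mul_le_right
  -- reverse inclusion via Nakayama
  have hMfin : (𝔐 : Ideal A).FG := by
    apply Submodule.fg_span
    apply Set.Finite.subset (Set.finite_range (fun i : Fin (n + 1) => (MvPowerSeries.X i : A)))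
    rintro g ⟨i, hi, rfl⟩
    exact ⟨i, rfl⟩
  have hJPfin : JP.FG := by
    apply Submodule.fg_span
    apply Set.Finite.subset
      (Set.finite_range (fun i : Fin (n + 1) => (↑(pderiv i P) : A)))
    rintro g ⟨i, hi, rfl⟩
    exact ⟨i, rfl⟩
  have hNfg : (M * JP).FG := Submodule.FG.mul (Submodule.FG.pow hMfin _) hJPfin
  have hTjac : Ideal.span {T} ≤ Ideal.jacobson (⊥ : Ideal A) := by
    rw [IsLocalRing.jacobson_eq_maximalIdeal (⊥ : Ideal A) bot_ne_top,
      Ideal.span_le, Set.singleton_subset_iff]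
    rw [SetLike.mem_coe, IsLocalRing.mem_maximalIdeal, mem_nonunits_iff,
      MvPowerSeries.isUnit_iff_constantCoeff, hTdef, MvPowerSeries.constantCoeff_X]
    exact not_isUnit_zero
  have hNN : M * JP ≤ M * Jf ⊔ Ideal.span {T} • (M * JP) := by
    calc M * JP ≤ M * (Jf ⊔ Ideal.span {T} * JQ) := Ideal.mul_mono_right hPle
      _ = M * Jf ⊔ Ideal.span {T} * (M * JQ) := by rw [Ideal.mul_sup, hre]
      _ ≤ M * Jf ⊔ Ideal.span {T} * (M * JP) :=
          sup_le_sup_left (Ideal.mul_mono_right hJQP) _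
      _ = M * Jf ⊔ Ideal.span {T} • (M * JP) := by rw [Ideal.smul_eq_mul]
  have h2 : M * JP ≤ M * Jf :=
    Submodule.le_of_le_smul_of_le_jacobson_bot hNfg hTjac hNN
  have heq : M * Jf = M * JP := le_antisymm h1 h2
  refine ⟨heq, fun hQmem => ?_⟩
  rw [heq]
  calc 𝔐 ^ k * Ideal.span {(↑Q : A)}
      ≤ 𝔐 ^ k * (𝔐 * JQ) := Ideal.mul_mono_right (by
        rw [Ideal.span_le, Set.singleton_subset_iff]; exact hQmem)
    _ = 𝔐 ^ (k + 1) * JQ := by rw [pow_succ]; ring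
    _ ≤ M * JP := hJQP
end
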